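/- Let 𝒞 be a category, let (C_n)_{n∈ℕ} be a family of objects of 𝒞, and let ε^n_i : C_{n+1} → C_n (1 ≤ i ≤ n) and σ^n_i : C_n → C_n (1 ≤ i ≤ n−1) be morphisms satisfying (diagrammatic composition) the pure codegeneracy relations ε_i;ε_j = ε_{j+1};ε_i (i ≤ j), the Moore relations σ_i;σ_i = 1, σ_i;σ_{i+1};σ_i = σ_{i+1};σ_i;σ_{i+1}, σ_j;σ_i = σ_i;σ_j (i < j−1), and the codegeneracy–symmetry relations ε_j;σ_i = σ_i;ε_j (i < j−1), ε_j;σ_i = σ_{i+1};ε_j (i > j), ε_i;σ_i = σ_{i+1};σ_i;ε_{i+1}, σ_i;ε_i = ε_i. Then there is a unique functor F : finCard_s → 𝒞 with F(n) = C_n, F(ε^n_i) = ε^n_i, and F(σ^n_i) = σ^n_i. -/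

import Mathlib

open CategoryTheory

/-- The category of finite cardinals and surjections: objects are natural numbers, and
morphisms `n ⟶ m` are the surjective functions `Fin n → Fin m` (composition is
diagrammatic). -/
structure FinCardS : Type where
  len : ℕ

instance : Category FinCardS where
  Hom n m := {f : Fin n.len → Fin m.len // Function.Surjective f}
  id _ := ⟨_root_.id, Function.surjective_id⟩
  comp f g := ⟨g.1 ∘ f.1, g.2.comp f.2⟩
  id_comp _ := rfl
  comp_id _ := rfl
  assoc _ _ _ := rfl

/-- The object of `FinCardS` corresponding to `n : ℕ`. -/
def FinCardS.of (n : ℕ) : FinCardS := ⟨n⟩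

/-- The codegeneracy function `ε^n_i : [n+1] → [n]` (1-based: `x ↦ x` if `x ≤ i`,
`x ↦ x−1` if `x > i`), written 0-based on `Fin`. Requires `1 ≤ i ≤ n`. -/
def epsF (n i : ℕ) (h1 : 1 ≤ i) (h2 : i ≤ n) : Fin (n + 1) → Fin n := fun x =>
  if h : x.val < i then ⟨x.val, by omega⟩
  else ⟨x.val - 1, by have := x.isLt; omega⟩

lemma epsF_surj (n i : ℕ) (h1 : 1 ≤ i) (h2 : i ≤ n) :
    Function.Surjective (epsF n i h1 h2) := by
  intro y
  by_cases hy : y.val < i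
  · exact ⟨⟨y.val, by omega⟩, by simp [epsF, hy]⟩
  · refine ⟨⟨y.val + 1, by have := y.isLt; omega⟩, ?_⟩
    simp only [epsF]
    rw [dif_neg (by omega)]
    apply Fin.ext
    simp

/-- The codegeneracy `ε^n_i` as a morphism of `FinCardS`. -/
def epsHomS (n i : ℕ) (h1 : 1 ≤ i) (h2 : i ≤ n) : FinCardS.of (n + 1) ⟶ FinCardS.of n :=
  ⟨epsF n i h1 h2, epsF_surj n i h1 h2⟩

/-- The symmetry `σ^n_i : [n] → [n]` (the transposition exchanging `i` and `i+1`, 1-based;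
i.e. of `i−1` and `i` in 0-based terms) as a morphism of `FinCardS`.
Requires `1 ≤ i ≤ n−1`. -/
def sigmaHomS (n i : ℕ) (h1 : 1 ≤ i) (h2 : i + 1 ≤ n) : FinCardS.of n ⟶ FinCardS.of n :=
  ⟨⇑(Equiv.swap (⟨i - 1, by omega⟩ : Fin n) ⟨i, by omega⟩), (Equiv.swap _ _).surjective⟩


namespace UFS
open Function
attribute [local instance 0] Classical.propDecidable
variable {n m p : ℕ}

def fv (f : Fin n → Fin m) (x : ℕ) : ℕ :=
  if h : x < n then (f ⟨x, h⟩).val else 0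

lemma fv_eq (f : Fin n → Fin m) {x : ℕ} (h : x < n) : fv f x = (f ⟨x, h⟩).val := dif_pos h

lemma fv_le (f : Fin n → Fin m) (x : ℕ) : fv f x ≤ m + 1 := by
  unfold fv; split
  · exact le_trans (Nat.le_of_lt (f _).isLt) (by omega)
  · omega

lemma fv_lt (f : Fin n → Fin m) {x : ℕ} (h : x < n) : fv f x < m := by
  rw [fv_eq f h]; exact (f ⟨x, h⟩).isLt

lemma eq_of_fv {f g : Fin n → Fin m} (h : ∀ x, x < n → fv f x = fv g x) : f = g := by
  funext x
  have hx := h x.val x.isLt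
  rw [fv_eq f x.isLt, fv_eq g x.isLt] at hx
  exact Fin.ext (by simpa using hx)

/-- the adjacent transposition of `k, k+1` (identity if out of range). -/
def sw (n k : ℕ) : Fin n → Fin n := fun x =>
  if h : x.val = k ∧ k + 1 < n then ⟨k + 1, h.2⟩
  else if h2 : x.val = k + 1 then ⟨k, by have := x.isLt; omega⟩
  else x

lemma sw_val (n k : ℕ) (x : Fin n) :
    (sw n k x).val = if x.val = k ∧ k + 1 < n then k + 1 else if x.val = k + 1 then k else x.val := by
  unfold sw
  split_ifs <;> rfl

lemma sw_invol (n k : ℕ) : sw n k ∘ sw n k = id := by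
  funext x
  apply Fin.ext
  show (sw n k (sw n k x)).val = x.val
  have h1 := sw_val n k x
  have h2 := sw_val n k (sw n k x)
  have hx := x.isLt
  rw [h1] at h2
  rw [h2]
  split_ifs <;> omega

lemma sw_surj (n k : ℕ) : Surjective (sw n k) :=
  fun y => ⟨sw n k y, congrFun (sw_invol n k) y⟩

lemma comp_sw_invol (f : Fin n → Fin m) (k : ℕ) : (f ∘ sw n k) ∘ sw n k = f := by
  rw [comp_assoc, sw_invol]; rfl

def ef (n k : ℕ) (h : k + 1 ≤ n) : Fin (n + 1) → Fin n :=
  fun x => if h' : x.val < k + 1 then ⟨x.val, by omega⟩ else ⟨x.val - 1, by have := x.isLt; omega⟩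

lemma ef_val (n k : ℕ) (h : k + 1 ≤ n) (x : Fin (n + 1)) :
    (ef n k h x).val = if x.val ≤ k then x.val else x.val - 1 := by
  unfold ef
  split_ifs <;> first | rfl | omega

def del (k : ℕ) (f : Fin (n + 1) → Fin m) : Fin n → Fin m := fun y =>
  if y.val ≤ k then f ⟨y.val, by have := y.isLt; omega⟩ else f ⟨y.val + 1, by have := y.isLt; omega⟩

def descAt (f : Fin n → Fin m) (k : ℕ) : Prop := k + 1 < n ∧ fv f (k + 1) < fv f k

def dupAt (f : Fin n → Fin m) (k : ℕ) : Prop := k + 1 < n ∧ fv f (k + 1) = fv f k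

lemma fv_comp (f : Fin n → Fin m) (g : Fin p → Fin n) {x : ℕ} (hx : x < p) :
    fv (f ∘ g) x = fv f ((g ⟨x, hx⟩).val) := by
  rw [fv_eq _ hx, fv_eq f (g ⟨x, hx⟩).isLt]
  rfl

lemma fv_comp_sw (f : Fin n → Fin m) {k : ℕ} (hk : k + 2 ≤ n) (x : ℕ) :
    fv (f ∘ sw n k) x = if x = k then fv f (k + 1) else if x = k + 1 then fv f k else fv f x := by
  by_cases hx : x < n
  · rw [fv_comp f (sw n k) hx]
    have h := sw_val n k ⟨x, hx⟩
    simp only [] at h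
    split_ifs with h1 h2 <;> rw [h] <;> split_ifs <;> first | rfl | omega
  · have h1 : ¬ (x = k) := by omega
    have h2 : ¬ (x = k + 1) := by omega
    rw [if_neg h1, if_neg h2]
    unfold fv
    rw [dif_neg hx, dif_neg hx]

lemma fv_comp_ef (f : Fin n → Fin m) {k : ℕ} (hk : k + 1 ≤ n) {x : ℕ} (hx : x < n + 1) :
    fv (f ∘ ef n k hk) x = if x ≤ k then fv f x else fv f (x - 1) := by
  rw [fv_comp f (ef n k hk) hx]
  have h := ef_val n k hk ⟨x, hx⟩
  simp only [] at h
  rw [h]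
  split_ifs <;> rfl

lemma fv_del (f : Fin (n + 1) → Fin m) {k x : ℕ} (hx : x < n) :
    fv (del k f) x = if x ≤ k then fv f x else fv f (x + 1) := by
  rw [fv_eq _ hx]
  show (if h : x ≤ k then _ else _ : Fin m).val = _
  split_ifs with h1
  · rw [fv_eq f (by omega)]
  · rw [fv_eq f (by omega)]

lemma del_factor {f : Fin (n + 1) → Fin m} {k : ℕ} (hd : dupAt f k) (hk : k + 1 ≤ n) :
    del k f ∘ ef n k hk = f := by
  obtain ⟨hb, hdup⟩ := hd
  apply eq_of_fv
  intro x hx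
  rw [fv_comp (del k f) (ef n k hk) hx]
  have h := ef_val n k hk ⟨x, hx⟩
  simp only [] at h
  by_cases hxk : x ≤ k
  · rw [h, if_pos hxk]
    rw [fv_del f (by omega)]
    rw [if_pos hxk]
  · by_cases hxk1 : x = k + 1
    · rw [h, if_neg (by omega), show x - 1 = k by omega]
      rw [fv_del f (by omega), if_pos (le_refl k)]
      rw [hxk1]
      exact hdup.symm
    · rw [h, if_neg (by omega), show x - 1 = x - 1 by rfl]
      rw [fv_del f (by omega), if_neg (by omega)]
      congr 1
      omega

lemma del_surj {f : Fin (n + 1) → Fin m} {k : ℕ} (hd : dupAt f k) (hk : k + 1 ≤ n)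
    (hf : Surjective f) : Surjective (del k f) := by
  rw [← del_factor hd hk] at hf
  exact hf.of_comp

def Mval (n m : ℕ) (f : Fin n → Fin m) : ℕ :=
  ∑ x ∈ Finset.range n, fv f x * (m + 2) ^ (n - 1 - x)

def msr (n m : ℕ) (f : Fin n → Fin m) : ℕ := (m + 2) ^ (2 * n) + Mval n m f

lemma geom (B : ℕ) (hB : 2 ≤ B) : ∀ L : ℕ, ∑ x ∈ Finset.range L, (B - 1) * B ^ (L - 1 - x) = B ^ L - 1 := by
  intro L
  induction L with
  | zero => simp
  | succ L ih =>
    rw [Finset.sum_range_succ']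
    have h0 : (B - 1) * B ^ (L + 1 - 1 - 0) = (B - 1) * B ^ L := by norm_num
    have hs : ∀ i ∈ Finset.range L, (B - 1) * B ^ (L + 1 - 1 - (i + 1)) = (B - 1) * B ^ (L - 1 - i) := by
      intro i hi; congr 1; congr 1; omega
    rw [Finset.sum_congr rfl hs, ih, h0]
    have hp : 1 ≤ B ^ L := Nat.one_le_pow _ _ (by omega)
    have hmul : (B - 1) * B ^ L + B ^ L = B * B ^ L := by
      have hle : B ^ L ≤ B * B ^ L := Nat.le_mul_of_pos_left _ (by omega)
      rw [Nat.sub_one_mul]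
      omega
    have hpow : B ^ (L + 1) = B * B ^ L := by rw [pow_succ, mul_comm]
    omega

lemma Mval_bound (f : Fin n → Fin m) : Mval n m f ≤ (m + 2) ^ n - 1 := by
  unfold Mval
  calc ∑ x ∈ Finset.range n, fv f x * (m + 2) ^ (n - 1 - x)
      ≤ ∑ x ∈ Finset.range n, (m + 2 - 1) * (m + 2) ^ (n - 1 - x) := by
        apply Finset.sum_le_sum
        intro i _
        exact Nat.mul_le_mul_right _ (by have := fv_le f i; omega)
    _ = (m + 2) ^ n - 1 := geom (m + 2) (by omega) n

lemma msr_lt_of_Mval {f g : Fin n → Fin m} (h : Mval n m g < Mval n m f) :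
    msr n m g < msr n m f := Nat.add_lt_add_left h _

lemma msr_level (f : Fin (n + 1) → Fin m) (d : Fin n → Fin m) : msr n m d < msr (n + 1) m f := by
  unfold msr
  have h1 : Mval n m d ≤ (m + 2) ^ n - 1 := Mval_bound d
  have h2 : (m + 2) ^ n ≤ (m + 2) ^ (2 * n) := Nat.pow_le_pow_right (by omega) (by omega)
  have h3 : (m + 2) ^ (2 * n) * 2 ≤ (m + 2) ^ (2 * n) * (m + 2) := Nat.mul_le_mul_left _ (by omega)
  have h4 : (m + 2) ^ (2 * n) * (m + 2) = (m + 2) ^ (2 * n + 1) := (pow_succ _ _).symm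
  have h5 : (m + 2) ^ (2 * n + 1) ≤ (m + 2) ^ (2 * (n + 1)) := Nat.pow_le_pow_right (by omega) (by omega)
  have h6 : 1 ≤ (m + 2) ^ n := Nat.one_le_pow _ _ (by omega)
  omega

lemma Mval_lt {f g : Fin n → Fin m} (t : ℕ) (ht : t < n)
    (hpre : ∀ x, x < t → fv g x = fv f x) (hlt : fv g t < fv f t) :
    Mval n m g < Mval n m f := by
  have hsplit : ∀ h : Fin n → Fin m, Mval n m h =
      (∑ x ∈ Finset.range t, fv h x * (m + 2) ^ (n - 1 - x)) + fv h t * (m + 2) ^ (n - 1 - t)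
        + ∑ x ∈ Finset.Ico (t + 1) n, fv h x * (m + 2) ^ (n - 1 - x) := by
    intro h
    unfold Mval
    rw [Finset.range_eq_Ico, ← Finset.sum_Ico_consecutive _ (Nat.zero_le (t + 1)) (by omega : t + 1 ≤ n),
      ← Finset.range_eq_Ico, Finset.sum_range_succ]
  rw [hsplit f, hsplit g]
  have hA : ∑ x ∈ Finset.range t, fv g x * (m + 2) ^ (n - 1 - x)
      = ∑ x ∈ Finset.range t, fv f x * (m + 2) ^ (n - 1 - x) := by
    apply Finset.sum_congr rfl
    intro i hi
    rw [hpre i (Finset.mem_range.mp hi)]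
  have htail : ∑ x ∈ Finset.Ico (t + 1) n, fv g x * (m + 2) ^ (n - 1 - x) < (m + 2) ^ (n - 1 - t) := by
    calc ∑ x ∈ Finset.Ico (t + 1) n, fv g x * (m + 2) ^ (n - 1 - x)
        ≤ ∑ x ∈ Finset.Ico (t + 1) n, (m + 2 - 1) * (m + 2) ^ (n - 1 - x) := by
          apply Finset.sum_le_sum
          intro i _
          exact Nat.mul_le_mul_right _ (by have := fv_le g i; omega)
      _ = ∑ i ∈ Finset.range (n - (t + 1)), (m + 2 - 1) * (m + 2) ^ (n - 1 - (t + 1 + i)) :=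
          Finset.sum_Ico_eq_sum_range _ _ _
      _ = ∑ i ∈ Finset.range (n - (t + 1)), (m + 2 - 1) * (m + 2) ^ (n - (t + 1) - 1 - i) := by
          apply Finset.sum_congr rfl
          intro i _
          congr 2
          omega
      _ = (m + 2) ^ (n - (t + 1)) - 1 := geom (m + 2) (by omega) _
      _ < (m + 2) ^ (n - 1 - t) := by
          have : n - (t + 1) = n - 1 - t := by omega
          rw [this]
          have : 1 ≤ (m + 2) ^ (n - 1 - t) := Nat.one_le_pow _ _ (by omega)
          omega
  have hmid : (fv g t + 1) * (m + 2) ^ (n - 1 - t) ≤ fv f t * (m + 2) ^ (n - 1 - t) :=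
    Nat.mul_le_mul_right _ hlt
  rw [hA]
  have hTf : 0 ≤ ∑ x ∈ Finset.Ico (t + 1) n, fv f x * (m + 2) ^ (n - 1 - x) := Nat.zero_le _
  have hexp : (fv g t + 1) * (m + 2) ^ (n - 1 - t) = fv g t * (m + 2) ^ (n - 1 - t) + (m + 2) ^ (n - 1 - t) := by
    ring
  omega


-- ===== function-level algebra of sw =====

def swx (k x : ℕ) : ℕ := if x = k then k + 1 else if x = k + 1 then k else x

lemma swx_eq1 {k v : ℕ} (h : v = k) : swx k v = k + 1 := by simp [swx, h]

lemma swx_eq2 {k v : ℕ} (h : v = k + 1) : swx k v = k := by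
  unfold swx; split_ifs <;> omega

lemma swx_eq3 {k v : ℕ} (h1 : v ≠ k) (h2 : v ≠ k + 1) : swx k v = v := by simp [swx, h1, h2]

lemma swx_lt {n k x : ℕ} (hk : k + 2 ≤ n) (hx : x < n) : swx k x < n := by
  unfold swx; split_ifs <;> omega

lemma sw_val' {n k : ℕ} (hk : k + 2 ≤ n) (x : Fin n) : (sw n k x).val = swx k x.val := by
  rw [sw_val]
  unfold swx
  split_ifs <;> omega

lemma swx_comm {j k : ℕ} (h : j + 2 ≤ k) (v : ℕ) : swx j (swx k v) = swx k (swx j v) := by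
  unfold swx; split_ifs <;> omega

lemma swx_braid {j : ℕ} (v : ℕ) : swx j (swx (j+1) (swx j v)) = swx (j+1) (swx j (swx (j+1) v)) := by
  by_cases h1 : v = j
  · rw [swx_eq3 (show v ≠ j + 1 by omega) (show v ≠ j + 1 + 1 by omega), swx_eq1 h1,
      swx_eq1 (rfl : (j:ℕ) + 1 = j + 1),
      swx_eq3 (show (j:ℕ) + 1 + 1 ≠ j by omega) (show (j:ℕ) + 1 + 1 ≠ j + 1 by omega)]
  by_cases h2 : v = j + 1
  · rw [swx_eq1 h2, swx_eq2 h2,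
      swx_eq3 (show (j:ℕ) ≠ j + 1 by omega) (show (j:ℕ) ≠ j + 1 + 1 by omega),
      swx_eq3 (show (j:ℕ) + 1 + 1 ≠ j by omega) (show (j:ℕ) + 1 + 1 ≠ j + 1 by omega),
      swx_eq1 (rfl : (j:ℕ) = j),
      swx_eq2 (rfl : (j:ℕ) + 1 + 1 = j + 1 + 1)]
  by_cases h3 : v = j + 2
  · rw [swx_eq3 h1 h2, swx_eq2 (show v = j + 1 + 1 by omega),
      swx_eq2 (rfl : (j:ℕ) + 1 = j + 1),
      swx_eq3 (show (j:ℕ) ≠ j + 1 by omega) (show (j:ℕ) ≠ j + 1 + 1 by omega)]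
  · rw [swx_eq3 h1 h2, swx_eq3 (show v ≠ j + 1 by omega) (show v ≠ j + 1 + 1 by omega),
      swx_eq3 h1 h2, swx_eq3 (show v ≠ j + 1 by omega) (show v ≠ j + 1 + 1 by omega)]

lemma sw_comm {n j k : ℕ} (hj : j + 2 ≤ n) (hk : k + 2 ≤ n) (h : j + 2 ≤ k) :
    sw n j ∘ sw n k = sw n k ∘ sw n j := by
  funext x
  apply Fin.ext
  show (sw n j (sw n k x)).val = (sw n k (sw n j x)).val
  rw [sw_val' hj, sw_val' hk, sw_val' hk, sw_val' hj]
  exact swx_comm h x.val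

lemma sw_braid {n j : ℕ} (h : j + 3 ≤ n) :
    sw n j ∘ sw n (j + 1) ∘ sw n j = sw n (j + 1) ∘ sw n j ∘ sw n (j + 1) := by
  funext x
  apply Fin.ext
  show (sw n j (sw n (j+1) (sw n j x))).val = (sw n (j+1) (sw n j (sw n (j+1) x))).val
  rw [sw_val' (by omega), sw_val' (by omega), sw_val' (by omega),
    sw_val' (by omega), sw_val' (by omega), sw_val' (by omega)]
  exact swx_braid x.val

lemma fv_comp_sw' (f : Fin n → Fin m) {k : ℕ} (hk : k + 2 ≤ n) {x : ℕ} (hx : x < n) :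
    fv (f ∘ sw n k) x = fv f (swx k x) := by
  rw [fv_comp_sw f hk]
  unfold swx
  split_ifs <;> rfl

lemma comp_sw_fix {f : Fin n → Fin m} {k : ℕ} (hd : dupAt f k) : f ∘ sw n k = f := by
  obtain ⟨hb, he⟩ := hd
  apply eq_of_fv
  intro x hx
  rw [fv_comp_sw f (by omega)]
  split_ifs with h1 h2 <;> first | (subst h1; omega) | (subst h2; omega) | rfl

-- ===== strictly monotone case =====

lemma strictMono_of_no_desc_dup {f : Fin n → Fin m}
    (hnd : ∀ k, ¬descAt f k) (hnu : ∀ k, ¬dupAt f k) : StrictMono f := by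
  have step : ∀ x, x + 1 < n → fv f x < fv f (x + 1) := by
    intro x hx
    have h1 := hnd x
    have h2 := hnu x
    unfold descAt at h1
    unfold dupAt at h2
    omega
  have chain : ∀ d a, a + d + 1 < n → fv f a < fv f (a + d + 1) := by
    intro d
    induction d with
    | zero => intro a ha; exact step a ha
    | succ d ih =>
      intro a ha
      have h1 := ih a (by omega)
      have h2 := step (a + d + 1) (by omega)
      have he : a + (d + 1) + 1 = a + d + 1 + 1 := by omega
      rw [he]
      omega
  intro a b hab
  have hv : fv f a.val < fv f b.val := by
    have hd : b.val = a.val + (b.val - a.val - 1) + 1 := by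
      have : a.val < b.val := hab
      omega
    rw [hd]
    exact chain _ _ (by rw [← hd]; exact b.isLt)
  rw [fv_eq f a.isLt, fv_eq f b.isLt] at hv
  simp only [Fin.eta] at hv
  exact hv

lemma mono_eq {f : Fin n → Fin m} (hf : Surjective f)
    (hnd : ∀ k, ¬descAt f k) (hnu : ∀ k, ¬dupAt f k) : n = m := by
  have hsm := strictMono_of_no_desc_dup hnd hnu
  have h1 : n ≤ m := by
    have := Fintype.card_le_of_injective f hsm.injective
    simpa using this
  have h2 : m ≤ n := by
    have := Fintype.card_le_of_surjective f hf
    simpa using this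
  omega

lemma mono_id {f : Fin n → Fin n} (hf : Surjective f)
    (hnd : ∀ k, ¬descAt f k) (hnu : ∀ k, ¬dupAt f k) : f = id := by
  have hsm := strictMono_of_no_desc_dup hnd hnu
  have hr : Set.range f = Set.range (id : Fin n → Fin n) := by
    rw [Set.range_id]
    exact Set.range_eq_univ.mpr hf
  haveI : WellFoundedLT (Fin n) := inferInstance
  exact (StrictMono.range_inj (β := Fin n) (γ := Fin n) hsm (strictMono_id (α := Fin n))).1 hr

lemma zero_eq {f : Fin 0 → Fin m} (hf : Surjective f) : (0 : ℕ) = m := by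
  by_contra h
  obtain ⟨x, -⟩ := hf ⟨0, Nat.pos_of_ne_zero fun hm => h hm.symm⟩
  exact x.elim0

lemma fv_id {x : ℕ} (hx : x < n) : fv (id : Fin n → Fin n) x = x := by
  rw [fv_eq _ hx]; rfl

lemma id_no_desc (k : ℕ) : ¬descAt (id : Fin n → Fin n) k := by
  unfold descAt
  rintro ⟨hb, hlt⟩
  rw [fv_id (show k + 1 < n by omega), fv_id (show k < n by omega)] at hlt
  omega

lemma id_no_dup (k : ℕ) : ¬dupAt (id : Fin n → Fin n) k := by
  unfold dupAt
  rintro ⟨hb, hlt⟩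
  rw [fv_id (show k + 1 < n by omega), fv_id (show k < n by omega)] at hlt
  omega

-- extra swx/sw word identities and del lemmas
lemma swx_swx (k v : ℕ) : swx k (swx k v) = v := by
  unfold swx; split_ifs <;> omega

lemma swx_word4 (j v : ℕ) : swx j (swx (j+1) (swx j (swx (j+1) v))) = swx (j+1) (swx j v) := by
  rw [swx_braid, swx_swx]

lemma swx_word5 (j v : ℕ) : swx j (swx (j+1) (swx j (swx (j+1) (swx j v)))) = swx (j+1) v := by
  rw [swx_braid, swx_swx, swx_swx]

lemma swx_word3 {j k : ℕ} (h : j + 2 ≤ k) (v : ℕ) : swx j (swx k (swx j v)) = swx k v := by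
  rw [swx_comm h, swx_swx]

lemma sw_word3 {n j k : ℕ} (hj : j + 2 ≤ n) (hk : k + 2 ≤ n) (h : j + 2 ≤ k) :
    sw n j ∘ sw n k ∘ sw n j = sw n k := by
  funext x
  apply Fin.ext
  show (sw n j (sw n k (sw n j x))).val = (sw n k x).val
  rw [sw_val' hj, sw_val' hk, sw_val' hj, sw_val' hk]
  exact swx_word3 h x.val

lemma sw_word4 {n j : ℕ} (h : j + 3 ≤ n) :
    sw n j ∘ sw n (j+1) ∘ sw n j ∘ sw n (j+1) = sw n (j+1) ∘ sw n j := by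
  funext x
  apply Fin.ext
  show (sw n j (sw n (j+1) (sw n j (sw n (j+1) x)))).val = (sw n (j+1) (sw n j x)).val
  rw [sw_val' (by omega), sw_val' (by omega), sw_val' (by omega), sw_val' (by omega),
    sw_val' (by omega), sw_val' (by omega)]
  exact swx_word4 j x.val

lemma sw_word5 {n j : ℕ} (h : j + 3 ≤ n) :
    sw n j ∘ sw n (j+1) ∘ sw n j ∘ sw n (j+1) ∘ sw n j = sw n (j+1) := by
  funext x
  apply Fin.ext
  show (sw n j (sw n (j+1) (sw n j (sw n (j+1) (sw n j x))))).val = (sw n (j+1) x).val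
  rw [sw_val' (by omega), sw_val' (by omega), sw_val' (by omega), sw_val' (by omega),
    sw_val' (by omega), sw_val' (by omega)]
  exact swx_word5 j x.val

lemma comp_word3 (f : Fin n → Fin m) {j k : ℕ} (hj : j + 2 ≤ n) (hk : k + 2 ≤ n) (h : j + 2 ≤ k) :
    ((f ∘ sw n j) ∘ sw n k) ∘ sw n j = f ∘ sw n k := by
  show f ∘ (sw n j ∘ sw n k ∘ sw n j) = f ∘ sw n k
  rw [sw_word3 hj hk h]

lemma comp_sw_comm (f : Fin n → Fin m) {j k : ℕ} (hj : j + 2 ≤ n) (hk : k + 2 ≤ n)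
    (h : j + 2 ≤ k) : (f ∘ sw n j) ∘ sw n k = (f ∘ sw n k) ∘ sw n j := by
  show f ∘ (sw n j ∘ sw n k) = f ∘ (sw n k ∘ sw n j)
  rw [sw_comm hj hk h]

lemma comp_word4 (f : Fin n → Fin m) {j : ℕ} (h : j + 3 ≤ n) :
    (((f ∘ sw n j) ∘ sw n (j+1)) ∘ sw n j) ∘ sw n (j+1) = (f ∘ sw n (j+1)) ∘ sw n j := by
  show f ∘ (sw n j ∘ sw n (j+1) ∘ sw n j ∘ sw n (j+1)) = f ∘ (sw n (j+1) ∘ sw n j)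
  rw [sw_word4 h]

lemma comp_word5 (f : Fin n → Fin m) {j : ℕ} (h : j + 3 ≤ n) :
    ((((f ∘ sw n j) ∘ sw n (j+1)) ∘ sw n j) ∘ sw n (j+1)) ∘ sw n j = f ∘ sw n (j+1) := by
  show f ∘ (sw n j ∘ sw n (j+1) ∘ sw n j ∘ sw n (j+1) ∘ sw n j) = f ∘ sw n (j+1)
  rw [sw_word5 h]

lemma no_desc_mono {f : Fin n → Fin m} (hnd : ∀ i, ¬descAt f i) :
    ∀ i, i + 1 < n → fv f i ≤ fv f (i+1) := by
  intro i h
  have := hnd i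
  unfold descAt at this
  omega

lemma del_no_desc {f : Fin (n+1) → Fin m} {j : ℕ} (hnd : ∀ i, ¬descAt f i) :
    ∀ i, ¬descAt (del j f) i := by
  rintro i ⟨hb, hlt⟩
  rw [fv_del f (by omega), fv_del f (by omega)] at hlt
  have s1 := no_desc_mono hnd i (by omega)
  have s2 := no_desc_mono hnd (i+1) (by omega)
  split_ifs at hlt <;> omega

-- ===== ef / efx infrastructure =====

def efx (k x : ℕ) : ℕ := if x ≤ k then x else x - 1

lemma efx_lt {n k x : ℕ} (hk : k + 1 ≤ n) (hx : x < n + 1) : efx k x < n := by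
  unfold efx; split_ifs <;> omega

lemma efx_eq_lo {k x : ℕ} (h : x ≤ k) : efx k x = x := by unfold efx; split_ifs <;> omega

lemma efx_eq_hi {k y : ℕ} (h : k ≤ y) : efx k (y + 1) = y := by unfold efx; split_ifs <;> omega

lemma ef_val'' {n k : ℕ} (h : k + 1 ≤ n) (x : Fin (n + 1)) : (ef n k h x).val = efx k x.val := by
  rw [ef_val]; unfold efx; split_ifs <;> omega

lemma fv_comp_ef' (f : Fin n → Fin m) {k : ℕ} (hk : k + 1 ≤ n) {x : ℕ} (hx : x < n + 1) :
    fv (f ∘ ef n k hk) x = fv f (efx k x) := by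
  rw [fv_comp f (ef n k hk) hx, ef_val'']

lemma efx_swx_low {j k : ℕ} (h : j + 2 ≤ k) (v : ℕ) : efx k (swx j v) = swx j (efx k v) := by
  unfold efx swx; split_ifs <;> omega

lemma efx_swx_high {j k : ℕ} (h : k < j) (v : ℕ) : efx k (swx (j+1) v) = swx j (efx k v) := by
  unfold efx swx; split_ifs <;> omega

lemma efx_swx_F6 (j v : ℕ) : efx (j+1) (swx j v) = swx j (efx j (swx (j+1) v)) := by
  unfold efx swx; split_ifs <;> omega

lemma efx_swx_F7 (k v : ℕ) : efx k (swx (k+1) (swx k v)) = swx k (efx (k+1) v) := by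
  unfold efx swx; split_ifs <;> omega

lemma ef_comp_sw_low (f : Fin n → Fin m) {j k : ℕ} (hk : k + 1 ≤ n) (hjk : j + 2 ≤ k)
    (hj : j + 2 ≤ n) :
    (f ∘ ef n k hk) ∘ sw (n+1) j = (f ∘ sw n j) ∘ ef n k hk := by
  apply eq_of_fv
  intro x hx
  rw [fv_comp_sw' (f ∘ ef n k hk) (by omega) hx, fv_comp_ef' f hk (swx_lt (by omega) hx),
    fv_comp_ef' (f ∘ sw n j) hk hx, fv_comp_sw' f hj (efx_lt hk hx), efx_swx_low hjk]

lemma ef_comp_sw_high (f : Fin n → Fin m) {j k : ℕ} (hk : k + 1 ≤ n) (hkj : k < j)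
    (hj : j + 2 ≤ n) :
    (f ∘ ef n k hk) ∘ sw (n+1) (j+1) = (f ∘ sw n j) ∘ ef n k hk := by
  apply eq_of_fv
  intro x hx
  rw [fv_comp_sw' (f ∘ ef n k hk) (by omega) hx, fv_comp_ef' f hk (swx_lt (by omega) hx),
    fv_comp_ef' (f ∘ sw n j) hk hx, fv_comp_sw' f hj (efx_lt hk hx), efx_swx_high hkj]

lemma ef_comp_F6 (f : Fin n → Fin m) {j : ℕ} (hk : j + 2 ≤ n) (h1 : j + 1 ≤ n) :
    (f ∘ ef n (j+1) hk) ∘ sw (n+1) j = ((f ∘ sw n j) ∘ ef n j h1) ∘ sw (n+1) (j+1) := by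
  apply eq_of_fv
  intro x hx
  rw [fv_comp_sw' (f ∘ ef n (j+1) hk) (by omega) hx,
    fv_comp_ef' f hk (swx_lt (by omega) hx),
    fv_comp_sw' ((f ∘ sw n j) ∘ ef n j h1) (by omega) hx,
    fv_comp_ef' (f ∘ sw n j) h1 (swx_lt (by omega) hx),
    fv_comp_sw' f (by omega) (efx_lt h1 (swx_lt (by omega) hx)),
    efx_swx_F6]

lemma ef_comp_F7 (f : Fin n → Fin m) {k : ℕ} (hk : k + 1 ≤ n) (h1 : k + 2 ≤ n) :
    ((f ∘ ef n k hk) ∘ sw (n+1) (k+1)) ∘ sw (n+1) k = (f ∘ sw n k) ∘ ef n (k+1) h1 := by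
  apply eq_of_fv
  intro x hx
  rw [fv_comp_sw' ((f ∘ ef n k hk) ∘ sw (n+1) (k+1)) (by omega) hx,
    fv_comp_sw' (f ∘ ef n k hk) (by omega) (swx_lt (by omega) hx),
    fv_comp_ef' f hk (swx_lt (by omega) (swx_lt (by omega) hx)),
    fv_comp_ef' (f ∘ sw n k) h1 hx,
    fv_comp_sw' f (by omega) (efx_lt h1 hx),
    efx_swx_F7]

lemma del_ef (f : Fin n → Fin m) {k : ℕ} (hk : k + 1 ≤ n) : del k (f ∘ ef n k hk) = f := by
  apply eq_of_fv
  intro y hy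
  rw [fv_del (f ∘ ef n k hk) hy]
  split_ifs with h1
  · rw [fv_comp_ef' f hk (by omega), efx_eq_lo h1]
  · rw [fv_comp_ef' f hk (by omega), efx_eq_hi (by omega)]

lemma del_comp_ef (f : Fin (n+1) → Fin m) {j k : ℕ} (hk : k + 2 ≤ n + 1) (hjk : j ≤ k)
    (h1 : k + 1 ≤ n) (hdup : fv f (j+1) = fv f j) :
    del j (f ∘ ef (n+1) (k+1) hk) = (del j f) ∘ ef n k h1 := by
  apply eq_of_fv
  intro y hy
  rw [fv_del (f ∘ ef (n+1) (k+1) hk) hy, fv_comp_ef' (del j f) h1 hy]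
  by_cases h2 : y ≤ j
  · rw [if_pos h2, fv_comp_ef' f hk (by omega), efx_eq_lo (by omega), efx_eq_lo (by omega),
      fv_del f (by omega), if_pos h2]
  · rw [if_neg h2]
    by_cases h3 : y ≤ k
    · rw [fv_comp_ef' f hk (by omega), efx_eq_lo (by omega), efx_eq_lo h3,
        fv_del f (by omega), if_neg h2]
    · obtain ⟨z, rfl⟩ : ∃ z, y = z + 1 := ⟨y - 1, by omega⟩
      rw [fv_comp_ef' f hk (by omega),
        show efx (k+1) (z+1+1) = z + 1 from efx_eq_hi (by omega),
        show efx k (z+1) = z from efx_eq_hi (by omega),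
        fv_del f (by omega)]
      by_cases h4 : z ≤ j
      · rw [if_pos h4]
        have hzj : z = j := by omega
        rw [hzj]
        exact hdup
      · rw [if_neg h4]

lemma comp_ef_no_desc {f : Fin n → Fin m} {k : ℕ} (hk : k + 1 ≤ n)
    (hnd : ∀ i, ¬descAt f i) : ∀ i, ¬descAt (f ∘ ef n k hk) i := by
  rintro i ⟨hb, hlt⟩
  rw [fv_comp_ef' f hk (by omega), fv_comp_ef' f hk (by omega)] at hlt
  by_cases h1 : i + 1 ≤ k
  · rw [efx_eq_lo h1, efx_eq_lo (by omega)] at hlt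
    exact hnd i ⟨by omega, hlt⟩
  · by_cases h2 : i = k
    · subst h2
      rw [efx_eq_lo (le_refl i), show efx i (i+1) = i from efx_eq_hi (le_refl i)] at hlt
      omega
    · obtain ⟨y, rfl⟩ : ∃ y, i = y + 1 := ⟨i - 1, by omega⟩
      rw [efx_eq_hi (by omega), efx_eq_hi (by omega)] at hlt
      exact hnd y ⟨by omega, hlt⟩

lemma ef_surj (n k : ℕ) (h : k + 1 ≤ n) : Function.Surjective (ef n k h) :=
  epsF_surj n (k+1) (by omega) h

section CatPart

variable {𝒞 : Type*} [Category 𝒞] (Cobj : ℕ → 𝒞)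
  (eps' : ∀ (n i : ℕ), 1 ≤ i → i ≤ n → (Cobj (n + 1) ⟶ Cobj n))
  (sig' : ∀ (n i : ℕ), 1 ≤ i → i + 1 ≤ n → (Cobj n ⟶ Cobj n))

def E (n k : ℕ) (h : k + 1 ≤ n) : Cobj (n + 1) ⟶ Cobj n := eps' n (k + 1) (by omega) h

def S (n k : ℕ) (h : k + 2 ≤ n) : Cobj n ⟶ Cobj n := sig' n (k + 1) (by omega) (by omega)

lemma E_congr {n k k' : ℕ} (h : k = k') (h1 : k + 1 ≤ n) (h2 : k' + 1 ≤ n) :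
    E Cobj eps' n k h1 = E Cobj eps' n k' h2 := by subst h; rfl

lemma S_congr {n k k' : ℕ} (h : k = k') (h1 : k + 2 ≤ n) (h2 : k' + 2 ≤ n) :
    S Cobj sig' n k h1 = S Cobj sig' n k' h2 := by subst h; rfl

lemma Mval_sw_desc {n m : ℕ} {f : Fin n → Fin m} {k : ℕ} (hk : descAt f k) :
    Mval n m (f ∘ sw n k) < Mval n m f := by
  obtain ⟨hb, hlt⟩ := hk
  apply Mval_lt k (by omega)
  · intro x hx
    rw [fv_comp_sw f (by omega), if_neg (by omega), if_neg (by omega)]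
  · rw [fv_comp_sw f (by omega), if_pos rfl]
    exact hlt

noncomputable def Phi : ∀ (n m : ℕ) (f : Fin n → Fin m), Function.Surjective f → (Cobj n ⟶ Cobj m)
  | 0, m, f, hf => eqToHom (congrArg Cobj (zero_eq hf))
  | (n+1), m, f, hf =>
    if hd : ∃ k, descAt f k then
      S Cobj sig' (n+1) (Nat.find hd) (by have := (Nat.find_spec hd).1; omega) ≫
        Phi (n+1) m (f ∘ sw (n+1) (Nat.find hd)) (hf.comp (sw_surj _ _))
    else if he : ∃ k, dupAt f k then
      E Cobj eps' n (Nat.find he) (by have := (Nat.find_spec he).1; omega) ≫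
        Phi n m (del (Nat.find he) f) (del_surj (Nat.find_spec he) (by have := (Nat.find_spec he).1; omega) hf)
    else
      eqToHom (congrArg Cobj (mono_eq hf (fun k hk => hd ⟨k, hk⟩) (fun k hk => he ⟨k, hk⟩)))
  termination_by n m f hf => msr n m f
  decreasing_by
  · exact msr_lt_of_Mval (Mval_sw_desc (Nat.find_spec hd))
  · exact msr_level _ _

lemma Phi_congr {n m : ℕ} {f g : Fin n → Fin m} (h : f = g) (hf : Function.Surjective f)
    (hg : Function.Surjective g) :
    Phi Cobj eps' sig' n m f hf = Phi Cobj eps' sig' n m g hg := by subst h; rfl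

lemma Phi_desc_unfold {n m : ℕ} (f : Fin (n+1) → Fin m) (hf : Function.Surjective f)
    (hd : ∃ k, descAt f k) (hS : Nat.find hd + 2 ≤ n + 1)
    (hg : Function.Surjective (f ∘ sw (n+1) (Nat.find hd))) :
    Phi Cobj eps' sig' (n+1) m f hf
      = S Cobj sig' (n+1) (Nat.find hd) hS ≫
          Phi Cobj eps' sig' (n+1) m (f ∘ sw (n+1) (Nat.find hd)) hg := by
  rw [Phi]
  rw [dif_pos hd]

lemma Phi_dup_unfold {n m : ℕ} (f : Fin (n+1) → Fin m) (hf : Function.Surjective f)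
    (hnd : ¬∃ k, descAt f k) (he : ∃ k, dupAt f k) (hE : Nat.find he + 1 ≤ n)
    (hg : Function.Surjective (del (Nat.find he) f)) :
    Phi Cobj eps' sig' (n+1) m f hf
      = E Cobj eps' n (Nat.find he) hE ≫ Phi Cobj eps' sig' n m (del (Nat.find he) f) hg := by
  rw [Phi]
  rw [dif_neg hnd, dif_pos he]

lemma Phi_mono_eq {n m : ℕ} (f : Fin n → Fin m) (hf : Function.Surjective f)
    (hnd : ∀ k, ¬descAt f k) (hnu : ∀ k, ¬dupAt f k) (hEq : Cobj n = Cobj m) :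
    Phi Cobj eps' sig' n m f hf = eqToHom hEq := by
  cases n with
  | zero => rw [Phi]
  | succ n =>
    rw [Phi, dif_neg (fun ⟨k, hk⟩ => hnd k hk), dif_neg (fun ⟨k, hk⟩ => hnu k hk)]

lemma Phi_descj {n m : ℕ} (f : Fin (n+1) → Fin m) (hf : Function.Surjective f)
    {j : ℕ} (hj : descAt f j) (hmin : ∀ i, i < j → ¬descAt f i)
    (hS : j + 2 ≤ n + 1) (hg : Function.Surjective (f ∘ sw (n+1) j)) :
    Phi Cobj eps' sig' (n+1) m f hf
      = S Cobj sig' (n+1) j hS ≫ Phi Cobj eps' sig' (n+1) m (f ∘ sw (n+1) j) hg := by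
  have hd : ∃ k, descAt f k := ⟨j, hj⟩
  have hfind : Nat.find hd = j := by
    rw [Nat.find_eq_iff]
    exact ⟨hj, fun i hi => hmin i hi⟩
  rw [Phi_desc_unfold Cobj eps' sig' f hf hd (by rw [hfind]; exact hS)
    (by rw [hfind]; exact hg)]
  exact congrArg₂ (· ≫ ·) (S_congr Cobj sig' hfind _ _) (Phi_congr Cobj eps' sig' (by rw [hfind]) _ _)

lemma Phi_dupj {n m : ℕ} (f : Fin (n+1) → Fin m) (hf : Function.Surjective f)
    (hnd : ∀ k, ¬descAt f k) {j : ℕ} (hj : dupAt f j) (hmin : ∀ i, i < j → ¬dupAt f i)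
    (hE : j + 1 ≤ n) (hg : Function.Surjective (del j f)) :
    Phi Cobj eps' sig' (n+1) m f hf
      = E Cobj eps' n j hE ≫ Phi Cobj eps' sig' n m (del j f) hg := by
  have he : ∃ k, dupAt f k := ⟨j, hj⟩
  have hfind : Nat.find he = j := by
    rw [Nat.find_eq_iff]
    exact ⟨hj, fun i hi => hmin i hi⟩
  rw [Phi_dup_unfold Cobj eps' sig' f hf (fun ⟨k, hk⟩ => hnd k hk) he (by rw [hfind]; exact hE)
    (by rw [hfind]; exact hg)]
  exact congrArg₂ (· ≫ ·) (E_congr Cobj eps' hfind _ _) (Phi_congr Cobj eps' sig' (by rw [hfind]) _ _)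

lemma Phi_id (n : ℕ) : Phi Cobj eps' sig' n n id Function.surjective_id = 𝟙 (Cobj n) := by
  rw [Phi_mono_eq Cobj eps' sig' id Function.surjective_id id_no_desc id_no_dup rfl, eqToHom_refl]

end CatPart

section Rels

variable {𝒞 : Type*} [Category 𝒞] (Cobj : ℕ → 𝒞)
  (eps' : ∀ (n i : ℕ), 1 ≤ i → i ≤ n → (Cobj (n + 1) ⟶ Cobj n))
  (sig' : ∀ (n i : ℕ), 1 ≤ i → i + 1 ≤ n → (Cobj n ⟶ Cobj n))

structure GoodRel : Prop where
  R1 : ∀ {n a b : ℕ} (hab : a ≤ b) (hb : b + 1 ≤ n) (h1 : a + 1 ≤ n + 1) (h2 : b + 2 ≤ n + 1)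
    (h3 : a + 1 ≤ n),
    E Cobj eps' (n+1) a h1 ≫ E Cobj eps' n b hb = E Cobj eps' (n+1) (b+1) h2 ≫ E Cobj eps' n a h3
  R2 : ∀ {n k : ℕ} (h : k + 2 ≤ n), S Cobj sig' n k h ≫ S Cobj sig' n k h = 𝟙 (Cobj n)
  R3 : ∀ {n k : ℕ} (h : k + 3 ≤ n) (h1 : k + 2 ≤ n),
    S Cobj sig' n k h1 ≫ S Cobj sig' n (k+1) h ≫ S Cobj sig' n k h1 = S Cobj sig' n (k+1) h ≫ S Cobj sig' n k h1 ≫ S Cobj sig' n (k+1) h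
  R4 : ∀ {n a b : ℕ} (hab : a + 2 ≤ b) (hb : b + 2 ≤ n) (ha : a + 2 ≤ n),
    S Cobj sig' n b hb ≫ S Cobj sig' n a ha = S Cobj sig' n a ha ≫ S Cobj sig' n b hb
  R5 : ∀ {n k l : ℕ} (hkl : k + 2 ≤ l) (hl : l + 1 ≤ n) (hk : k + 2 ≤ n) (hk' : k + 2 ≤ n + 1),
    E Cobj eps' n l hl ≫ S Cobj sig' n k hk = S Cobj sig' (n+1) k hk' ≫ E Cobj eps' n l hl
  R6 : ∀ {n k l : ℕ} (hlk : l < k) (hk : k + 2 ≤ n) (hl : l + 1 ≤ n) (hk' : k + 3 ≤ n + 1),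
    E Cobj eps' n l hl ≫ S Cobj sig' n k hk = S Cobj sig' (n+1) (k+1) hk' ≫ E Cobj eps' n l hl
  R7 : ∀ {n k : ℕ} (hk : k + 2 ≤ n) (h1 : k + 1 ≤ n) (h2 : k + 2 ≤ n + 1) (h3 : k + 3 ≤ n + 1)
    (h4 : k + 2 ≤ n),
    E Cobj eps' n k h1 ≫ S Cobj sig' n k hk = S Cobj sig' (n+1) (k+1) h3 ≫ S Cobj sig' (n+1) k h2 ≫ E Cobj eps' n (k+1) h4
  R8 : ∀ {n k : ℕ} (hk : k + 1 ≤ n) (h2 : k + 2 ≤ n + 1),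
    S Cobj sig' (n+1) k h2 ≫ E Cobj eps' n k hk = E Cobj eps' n k hk

variable {Cobj eps' sig'} (hR : GoodRel Cobj eps' sig')

include hR

-- continuation (reassoc) versions
lemma R1a {n a b : ℕ} (hab : a ≤ b) (hb : b + 1 ≤ n) (h1 : a + 1 ≤ n + 1) (h2 : b + 2 ≤ n + 1)
    (h3 : a + 1 ≤ n) {Z : 𝒞} (X : Cobj n ⟶ Z) :
    E Cobj eps' (n+1) a h1 ≫ E Cobj eps' n b hb ≫ X = E Cobj eps' (n+1) (b+1) h2 ≫ E Cobj eps' n a h3 ≫ X := by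
  rw [← Category.assoc, hR.R1 hab hb h1 h2 h3, Category.assoc]

lemma R2a {n k : ℕ} (h : k + 2 ≤ n) {Z : 𝒞} (X : Cobj n ⟶ Z) :
    S Cobj sig' n k h ≫ S Cobj sig' n k h ≫ X = X := by
  rw [← Category.assoc, hR.R2 h, Category.id_comp]

lemma R3a {n k : ℕ} (h : k + 3 ≤ n) (h1 : k + 2 ≤ n) {Z : 𝒞} (X : Cobj n ⟶ Z) :
    S Cobj sig' n k h1 ≫ S Cobj sig' n (k+1) h ≫ S Cobj sig' n k h1 ≫ X = S Cobj sig' n (k+1) h ≫ S Cobj sig' n k h1 ≫ S Cobj sig' n (k+1) h ≫ X := by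
  have := hR.R3 h h1
  calc S Cobj sig' n k h1 ≫ S Cobj sig' n (k+1) h ≫ S Cobj sig' n k h1 ≫ X
      = (S Cobj sig' n k h1 ≫ S Cobj sig' n (k+1) h ≫ S Cobj sig' n k h1) ≫ X := by simp only [Category.assoc]
    _ = (S Cobj sig' n (k+1) h ≫ S Cobj sig' n k h1 ≫ S Cobj sig' n (k+1) h) ≫ X := by rw [this]
    _ = S Cobj sig' n (k+1) h ≫ S Cobj sig' n k h1 ≫ S Cobj sig' n (k+1) h ≫ X := by simp only [Category.assoc]

lemma R4a {n a b : ℕ} (hab : a + 2 ≤ b) (hb : b + 2 ≤ n) (ha : a + 2 ≤ n) {Z : 𝒞}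
    (X : Cobj n ⟶ Z) :
    S Cobj sig' n b hb ≫ S Cobj sig' n a ha ≫ X = S Cobj sig' n a ha ≫ S Cobj sig' n b hb ≫ X := by
  rw [← Category.assoc, hR.R4 hab hb ha, Category.assoc]

lemma R4s {n a b : ℕ} (hab : a + 2 ≤ b ∨ b + 2 ≤ a) (hb : b + 2 ≤ n) (ha : a + 2 ≤ n) {Z : 𝒞}
    (X : Cobj n ⟶ Z) :
    S Cobj sig' n b hb ≫ S Cobj sig' n a ha ≫ X = S Cobj sig' n a ha ≫ S Cobj sig' n b hb ≫ X := by
  rcases hab with h | h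
  · exact R4a hR h hb ha X
  · exact (R4a hR h ha hb X).symm

lemma R5a {n k l : ℕ} (hkl : k + 2 ≤ l) (hl : l + 1 ≤ n) (hk : k + 2 ≤ n) (hk' : k + 2 ≤ n + 1)
    {Z : 𝒞} (X : Cobj n ⟶ Z) :
    E Cobj eps' n l hl ≫ S Cobj sig' n k hk ≫ X = S Cobj sig' (n+1) k hk' ≫ E Cobj eps' n l hl ≫ X := by
  rw [← Category.assoc, hR.R5 hkl hl hk hk', Category.assoc]

lemma R6a {n k l : ℕ} (hlk : l < k) (hk : k + 2 ≤ n) (hl : l + 1 ≤ n) (hk' : k + 3 ≤ n + 1)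
    {Z : 𝒞} (X : Cobj n ⟶ Z) :
    E Cobj eps' n l hl ≫ S Cobj sig' n k hk ≫ X = S Cobj sig' (n+1) (k+1) hk' ≫ E Cobj eps' n l hl ≫ X := by
  rw [← Category.assoc, hR.R6 hlk hk hl hk', Category.assoc]

lemma R7a {n k : ℕ} (hk : k + 2 ≤ n) (h1 : k + 1 ≤ n) (h2 : k + 2 ≤ n + 1) (h3 : k + 3 ≤ n + 1)
    (h4 : k + 2 ≤ n) {Z : 𝒞} (X : Cobj n ⟶ Z) :
    E Cobj eps' n k h1 ≫ S Cobj sig' n k hk ≫ X = S Cobj sig' (n+1) (k+1) h3 ≫ S Cobj sig' (n+1) k h2 ≫ E Cobj eps' n (k+1) h4 ≫ X := by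
  have := hR.R7 hk h1 h2 h3 h4
  calc E Cobj eps' n k h1 ≫ S Cobj sig' n k hk ≫ X = (E Cobj eps' n k h1 ≫ S Cobj sig' n k hk) ≫ X := by simp only [Category.assoc]
    _ = (S Cobj sig' (n+1) (k+1) h3 ≫ S Cobj sig' (n+1) k h2 ≫ E Cobj eps' n (k+1) h4) ≫ X := by rw [this]
    _ = _ := by simp only [Category.assoc]

lemma R8a {n k : ℕ} (hk : k + 1 ≤ n) (h2 : k + 2 ≤ n + 1) {Z : 𝒞} (X : Cobj n ⟶ Z) :
    S Cobj sig' (n+1) k h2 ≫ E Cobj eps' n k hk ≫ X = E Cobj eps' n k hk ≫ X := by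
  rw [← Category.assoc, hR.R8 hk h2]

lemma braid4 {n j : ℕ} (h : j + 3 ≤ n) (h1 : j + 2 ≤ n) {Z : 𝒞} (X : Cobj n ⟶ Z) :
    S Cobj sig' n j h1 ≫ S Cobj sig' n (j+1) h ≫ S Cobj sig' n j h1 ≫ S Cobj sig' n (j+1) h ≫ X
      = S Cobj sig' n (j+1) h ≫ S Cobj sig' n j h1 ≫ X := by
  rw [R3a hR h h1 (S Cobj sig' n (j+1) h ≫ X)]
  congr 1
  congr 1
  exact R2a hR h X

lemma R9a {n k : ℕ} (hke : k + 2 ≤ n) (hk1 : k + 1 ≤ n) (hsk : k + 2 ≤ n + 1)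
    (hsk1 : k + 3 ≤ n + 1) {Z : 𝒞} (X : Cobj n ⟶ Z) :
    E Cobj eps' n (k+1) hke ≫ S Cobj sig' n k hke ≫ X
      = S Cobj sig' (n+1) k hsk ≫ S Cobj sig' (n+1) (k+1) hsk1 ≫ E Cobj eps' n k hk1 ≫ X := by
  have h7 := R7a hR hke hk1 hsk hsk1 hke (S Cobj sig' n k hke ≫ X)
  rw [R2a hR hke X] at h7
  rw [h7, R2a hR hsk1, R2a hR hsk]

end Rels

section L1sec

variable {𝒞 : Type*} [Category 𝒞] {Cobj : ℕ → 𝒞}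
  {eps' : ∀ (n i : ℕ), 1 ≤ i → i ≤ n → (Cobj (n + 1) ⟶ Cobj n)}
  {sig' : ∀ (n i : ℕ), 1 ≤ i → i + 1 ≤ n → (Cobj n ⟶ Cobj n)}

theorem L1 (hR : GoodRel Cobj eps' sig') (μ : ℕ) :
    ∀ {n m : ℕ} (f : Fin n → Fin m) (hf : Function.Surjective f), msr n m f ≤ μ →
    ∀ (k : ℕ) (hk : k + 2 ≤ n) (hg : Function.Surjective (f ∘ sw n k)),
    Phi Cobj eps' sig' n m (f ∘ sw n k) hg = S Cobj sig' n k hk ≫ Phi Cobj eps' sig' n m f hf := by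
  induction μ using Nat.strong_induction_on with
  | _ μ IH =>
  intro n m f hf hμ k hk hg
  obtain ⟨N, rfl⟩ : ∃ N, n = N + 1 := ⟨n - 1, by omega⟩
  have key : ∀ {n' : ℕ} (f' : Fin n' → Fin m) (hf' : Function.Surjective f'),
      msr n' m f' < msr (N+1) m f →
      ∀ (k' : ℕ) (hk' : k' + 2 ≤ n') (hg' : Function.Surjective (f' ∘ sw n' k')),
      Phi Cobj eps' sig' n' m (f' ∘ sw n' k') hg' = S Cobj sig' n' k' hk' ≫ Phi Cobj eps' sig' n' m f' hf' :=
    fun f' hf' hlt k' hk' hg' => IH (msr _ m f') (by omega) f' hf' le_rfl k' hk' hg'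
  have absorb : ∀ {n' : ℕ} (f' : Fin n' → Fin m) (hf' : Function.Surjective f'),
      msr n' m f' < msr (N+1) m f →
      ∀ (k' : ℕ) (hk' : k' + 2 ≤ n'), fv f' (k'+1) = fv f' k' →
      S Cobj sig' n' k' hk' ≫ Phi Cobj eps' sig' n' m f' hf' = Phi Cobj eps' sig' n' m f' hf' := by
    intro n' f' hf' hlt k' hk' hdup
    rw [← key f' hf' hlt k' hk' (hf'.comp (sw_surj _ _))]
    exact Phi_congr Cobj eps' sig' (comp_sw_fix ⟨by omega, hdup⟩) _ _
  rcases Nat.lt_trichotomy (fv f (k+1)) (fv f k) with hdesc | hdup | hasc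
  -- ================== CASE II : k is a descent of f =====================
  · have hdK : descAt f k := ⟨by omega, hdesc⟩
    have hd : ∃ i, descAt f i := ⟨k, hdK⟩
    have hjspec := Nat.find_spec hd
    have hjmin : ∀ i, i < Nat.find hd → ¬descAt f i := fun i hi => Nat.find_min hd hi
    have hjk : Nat.find hd ≤ k := Nat.find_min' hd hdK
    obtain ⟨j, hjdef⟩ : ∃ j, Nat.find hd = j := ⟨_, rfl⟩
    rw [hjdef] at hjspec hjmin hjk
    have hj1 : j + 1 < N + 1 := hjspec.1
    have hMh : msr (N+1) m (f ∘ sw (N+1) j) < msr (N+1) m f := msr_lt_of_Mval (Mval_sw_desc hjspec)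
    have hSh : Function.Surjective (f ∘ sw (N+1) j) := hf.comp (sw_surj _ _)
    by_cases hjkeq : j = k
    · -- II.a : k is the least descent
      subst hjkeq
      rw [Phi_descj Cobj eps' sig' f hf hjspec hjmin hk hSh]
      rw [R2a hR hk]
    · have hjlt : j < k := by omega
      by_cases hjk1 : j + 1 = k
      · -- II.b.2 : k = j+1, braid case
        subst hjk1
        have hS2 : Function.Surjective ((f ∘ sw (N+1) j) ∘ sw (N+1) (j+1)) := hSh.comp (sw_surj _ _)
        have hS3 : Function.Surjective (((f ∘ sw (N+1) j) ∘ sw (N+1) (j+1)) ∘ sw (N+1) j) := hS2.comp (sw_surj _ _)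
        have hS4 : Function.Surjective ((((f ∘ sw (N+1) j) ∘ sw (N+1) (j+1)) ∘ sw (N+1) j) ∘ sw (N+1) (j+1)) := hS3.comp (sw_surj _ _)
        have hS5 : Function.Surjective (((((f ∘ sw (N+1) j) ∘ sw (N+1) (j+1)) ∘ sw (N+1) j) ∘ sw (N+1) (j+1)) ∘ sw (N+1) j) := hS4.comp (sw_surj _ _)
        have hM2 : msr (N+1) m ((f ∘ sw (N+1) j) ∘ sw (N+1) (j+1)) < msr (N+1) m f := by
          apply msr_lt_of_Mval
          apply Mval_lt j (by omega)
          · intro x hx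
            rw [fv_comp_sw' _ (by omega) (by omega : x < N + 1),
              swx_eq3 (show x ≠ j + 1 by omega) (show x ≠ j + 1 + 1 by omega),
              fv_comp_sw' f (by omega) (by omega : x < N + 1),
              swx_eq3 (show x ≠ j by omega) (show x ≠ j + 1 by omega)]
          · rw [fv_comp_sw' _ (by omega) (by omega : j < N + 1),
              swx_eq3 (show j ≠ j + 1 by omega) (show j ≠ j + 1 + 1 by omega),
              fv_comp_sw' f (by omega) (by omega : j < N + 1), swx_eq1 (rfl : (j:ℕ) = j)]
            exact hjspec.2
        have hM3 : msr (N+1) m (((f ∘ sw (N+1) j) ∘ sw (N+1) (j+1)) ∘ sw (N+1) j) < msr (N+1) m f := by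
          apply msr_lt_of_Mval
          apply Mval_lt j (by omega)
          · intro x hx
            rw [fv_comp_sw' _ (by omega) (by omega : x < N + 1),
              swx_eq3 (show x ≠ j by omega) (show x ≠ j + 1 by omega),
              fv_comp_sw' _ (by omega) (by omega : x < N + 1),
              swx_eq3 (show x ≠ j + 1 by omega) (show x ≠ j + 1 + 1 by omega),
              fv_comp_sw' f (by omega) (by omega : x < N + 1),
              swx_eq3 (show x ≠ j by omega) (show x ≠ j + 1 by omega)]
          · rw [fv_comp_sw' _ (by omega) (by omega : j < N + 1), swx_eq1 (rfl : (j:ℕ) = j),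
              fv_comp_sw' _ (by omega) (by omega : j + 1 < N + 1), swx_eq1 (rfl : (j:ℕ)+1 = j+1),
              fv_comp_sw' f (by omega) (by omega : j + 1 + 1 < N + 1),
              swx_eq3 (show j + 1 + 1 ≠ j by omega) (show j + 1 + 1 ≠ j + 1 by omega)]
            have h1 := hjspec.2
            omega
        have hM4 : msr (N+1) m ((((f ∘ sw (N+1) j) ∘ sw (N+1) (j+1)) ∘ sw (N+1) j) ∘ sw (N+1) (j+1)) < msr (N+1) m f := by
          apply msr_lt_of_Mval
          apply Mval_lt j (by omega)
          · intro x hx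
            rw [fv_comp_sw' _ (by omega) (by omega : x < N + 1),
              swx_eq3 (show x ≠ j + 1 by omega) (show x ≠ j + 1 + 1 by omega),
              fv_comp_sw' _ (by omega) (by omega : x < N + 1),
              swx_eq3 (show x ≠ j by omega) (show x ≠ j + 1 by omega),
              fv_comp_sw' _ (by omega) (by omega : x < N + 1),
              swx_eq3 (show x ≠ j + 1 by omega) (show x ≠ j + 1 + 1 by omega),
              fv_comp_sw' f (by omega) (by omega : x < N + 1),
              swx_eq3 (show x ≠ j by omega) (show x ≠ j + 1 by omega)]
          · rw [fv_comp_sw' _ (by omega) (by omega : j < N + 1),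
              swx_eq3 (show j ≠ j + 1 by omega) (show j ≠ j + 1 + 1 by omega),
              fv_comp_sw' _ (by omega) (by omega : j < N + 1), swx_eq1 (rfl : (j:ℕ) = j),
              fv_comp_sw' _ (by omega) (by omega : j + 1 < N + 1), swx_eq1 (rfl : (j:ℕ)+1 = j+1),
              fv_comp_sw' f (by omega) (by omega : j + 1 + 1 < N + 1),
              swx_eq3 (show j + 1 + 1 ≠ j by omega) (show j + 1 + 1 ≠ j + 1 by omega)]
            have h1 := hjspec.2
            omega
        have e1 := key (f ∘ sw (N+1) j) hSh hMh (j+1) hk hS2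
        have e2 := key ((f ∘ sw (N+1) j) ∘ sw (N+1) (j+1)) hS2 hM2 j (by omega) hS3
        have e3 := key (((f ∘ sw (N+1) j) ∘ sw (N+1) (j+1)) ∘ sw (N+1) j) hS3 hM3 (j+1) hk hS4
        have e4 := key ((((f ∘ sw (N+1) j) ∘ sw (N+1) (j+1)) ∘ sw (N+1) j) ∘ sw (N+1) (j+1)) hS4 hM4 j (by omega) hS5
        calc Phi Cobj eps' sig' (N+1) m (f ∘ sw (N+1) (j+1)) hg
            = Phi Cobj eps' sig' (N+1) m (((((f ∘ sw (N+1) j) ∘ sw (N+1) (j+1)) ∘ sw (N+1) j) ∘ sw (N+1) (j+1)) ∘ sw (N+1) j) hS5 :=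
              Phi_congr Cobj eps' sig' (comp_word5 f (by omega)).symm hg hS5
          _ = S Cobj sig' (N+1) j (by omega) ≫ Phi Cobj eps' sig' (N+1) m ((((f ∘ sw (N+1) j) ∘ sw (N+1) (j+1)) ∘ sw (N+1) j) ∘ sw (N+1) (j+1)) hS4 := e4
          _ = S Cobj sig' (N+1) j (by omega) ≫ S Cobj sig' (N+1) (j+1) hk ≫ Phi Cobj eps' sig' (N+1) m (((f ∘ sw (N+1) j) ∘ sw (N+1) (j+1)) ∘ sw (N+1) j) hS3 := by rw [e3]
          _ = S Cobj sig' (N+1) j (by omega) ≫ S Cobj sig' (N+1) (j+1) hk ≫ S Cobj sig' (N+1) j (by omega) ≫ Phi Cobj eps' sig' (N+1) m ((f ∘ sw (N+1) j) ∘ sw (N+1) (j+1)) hS2 := by rw [e2]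
          _ = S Cobj sig' (N+1) j (by omega) ≫ S Cobj sig' (N+1) (j+1) hk ≫ S Cobj sig' (N+1) j (by omega) ≫ S Cobj sig' (N+1) (j+1) hk ≫ Phi Cobj eps' sig' (N+1) m (f ∘ sw (N+1) j) hSh := by rw [e1]
          _ = S Cobj sig' (N+1) (j+1) hk ≫ S Cobj sig' (N+1) j (by omega) ≫ Phi Cobj eps' sig' (N+1) m (f ∘ sw (N+1) j) hSh :=
              braid4 hR hk (by omega) _
          _ = S Cobj sig' (N+1) (j+1) hk ≫ Phi Cobj eps' sig' (N+1) m f hf := by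
              rw [← Phi_descj Cobj eps' sig' f hf hjspec hjmin (by omega) hSh]
      · -- II.b.1 : j + 2 ≤ k
        have hjk2 : j + 2 ≤ k := by omega
        have hdesc_hk : descAt (f ∘ sw (N+1) j) k := by
          refine ⟨by omega, ?_⟩
          rw [fv_comp_sw' f (by omega) (by omega : k + 1 < N + 1),
            swx_eq3 (show k + 1 ≠ j by omega) (show k + 1 ≠ j + 1 by omega),
            fv_comp_sw' f (by omega) (by omega : k < N + 1),
            swx_eq3 (show k ≠ j by omega) (show k ≠ j + 1 by omega)]
          exact hdesc
        have hShk : Function.Surjective ((f ∘ sw (N+1) j) ∘ sw (N+1) k) := hSh.comp (sw_surj _ _)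
        have hShkj : Function.Surjective (((f ∘ sw (N+1) j) ∘ sw (N+1) k) ∘ sw (N+1) j) := hShk.comp (sw_surj _ _)
        have hMhk : msr (N+1) m ((f ∘ sw (N+1) j) ∘ sw (N+1) k) < msr (N+1) m f :=
          lt_trans (msr_lt_of_Mval (Mval_sw_desc hdesc_hk)) hMh
        calc Phi Cobj eps' sig' (N+1) m (f ∘ sw (N+1) k) hg
            = Phi Cobj eps' sig' (N+1) m (((f ∘ sw (N+1) j) ∘ sw (N+1) k) ∘ sw (N+1) j) hShkj :=
              Phi_congr Cobj eps' sig' (comp_word3 f (by omega) hk hjk2).symm hg hShkj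
          _ = S Cobj sig' (N+1) j (by omega) ≫ Phi Cobj eps' sig' (N+1) m ((f ∘ sw (N+1) j) ∘ sw (N+1) k) hShk :=
              key ((f ∘ sw (N+1) j) ∘ sw (N+1) k) hShk hMhk j (by omega) hShkj
          _ = S Cobj sig' (N+1) j (by omega) ≫ S Cobj sig' (N+1) k hk ≫ Phi Cobj eps' sig' (N+1) m (f ∘ sw (N+1) j) hSh := by
              rw [key (f ∘ sw (N+1) j) hSh hMh k hk hShk]
          _ = S Cobj sig' (N+1) k hk ≫ S Cobj sig' (N+1) j (by omega) ≫ Phi Cobj eps' sig' (N+1) m (f ∘ sw (N+1) j) hSh :=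
              (R4a hR hjk2 hk (by omega) _).symm
          _ = S Cobj sig' (N+1) k hk ≫ Phi Cobj eps' sig' (N+1) m f hf := by
              rw [← Phi_descj Cobj eps' sig' f hf hjspec hjmin (by omega) hSh]
  -- ================== CASE I : k is a duplication of f =====================
  · rw [Phi_congr Cobj eps' sig' (comp_sw_fix ⟨by omega, hdup⟩) hg hf]
    by_cases hdf : ∃ i, descAt f i
    · have hjspec := Nat.find_spec hdf
      have hjmin : ∀ i, i < Nat.find hdf → ¬descAt f i := fun i hi => Nat.find_min hdf hi
      obtain ⟨j, hjdef⟩ : ∃ j, Nat.find hdf = j := ⟨_, rfl⟩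
      rw [hjdef] at hjspec hjmin
      have hj1 : j + 1 < N + 1 := hjspec.1
      have hjne : j ≠ k := by
        intro h
        rw [h] at hjspec
        have := hjspec.2
        omega
      have hMh : msr (N+1) m (f ∘ sw (N+1) j) < msr (N+1) m f := msr_lt_of_Mval (Mval_sw_desc hjspec)
      have hSh : Function.Surjective (f ∘ sw (N+1) j) := hf.comp (sw_surj _ _)
      rw [Phi_descj Cobj eps' sig' f hf hjspec hjmin (by omega) hSh]
      by_cases hjk2 : j = k + 1
      · -- I.a.2 : descent right after the dup
        subst hjk2
        have hSr : Function.Surjective ((f ∘ sw (N+1) (k+1)) ∘ sw (N+1) k) := hSh.comp (sw_surj _ _)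
        have hdesc_h : descAt (f ∘ sw (N+1) (k+1)) k := by
          refine ⟨by omega, ?_⟩
          rw [fv_comp_sw' f (by omega) (by omega : k + 1 < N + 1), swx_eq1 (rfl : (k:ℕ)+1 = k+1),
            fv_comp_sw' f (by omega) (by omega : k < N + 1),
            swx_eq3 (show k ≠ k + 1 by omega) (show k ≠ k + 1 + 1 by omega)]
          have h1 := hjspec.2
          omega
        have hMr : msr (N+1) m ((f ∘ sw (N+1) (k+1)) ∘ sw (N+1) k) < msr (N+1) m f :=
          lt_trans (msr_lt_of_Mval (Mval_sw_desc hdesc_h)) hMh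
        have e1 := key (f ∘ sw (N+1) (k+1)) hSh hMh k hk hSr
        have hdup_r : fv ((f ∘ sw (N+1) (k+1)) ∘ sw (N+1) k) (k+1+1) = fv ((f ∘ sw (N+1) (k+1)) ∘ sw (N+1) k) (k+1) := by
          rw [fv_comp_sw' _ (by omega) (by omega : k + 1 + 1 < N + 1),
            swx_eq3 (show k + 1 + 1 ≠ k by omega) (show k + 1 + 1 ≠ k + 1 by omega),
            fv_comp_sw' f (by omega) (by omega : k + 1 + 1 < N + 1),
            swx_eq2 (rfl : (k:ℕ)+1+1 = k+1+1),
            fv_comp_sw' _ (by omega) (by omega : k + 1 < N + 1),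
            swx_eq2 (rfl : (k:ℕ)+1 = k+1),
            fv_comp_sw' f (by omega) (by omega : k < N + 1),
            swx_eq3 (show k ≠ k + 1 by omega) (show k ≠ k + 1 + 1 by omega)]
          exact hdup
        have habs := absorb ((f ∘ sw (N+1) (k+1)) ∘ sw (N+1) k) hSr hMr (k+1) (by omega) hdup_r
        have e1' : Phi Cobj eps' sig' (N+1) m (f ∘ sw (N+1) (k+1)) hSh
            = S Cobj sig' (N+1) k hk ≫ Phi Cobj eps' sig' (N+1) m ((f ∘ sw (N+1) (k+1)) ∘ sw (N+1) k) hSr := by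
          rw [e1, ← Category.assoc, hR.R2 hk, Category.id_comp]
        rw [e1']
        rw [R3a hR (by omega) hk]
        rw [habs]
      · by_cases hjk3 : j + 1 = k
        · -- I.a.3 : descent right before the dup
          subst hjk3
          have hSr : Function.Surjective ((f ∘ sw (N+1) j) ∘ sw (N+1) (j+1)) := hSh.comp (sw_surj _ _)
          have hdesc_h : descAt (f ∘ sw (N+1) j) (j+1) := by
            refine ⟨by omega, ?_⟩
            rw [fv_comp_sw' f (by omega) (by omega : j + 1 + 1 < N + 1),
              swx_eq3 (show j + 1 + 1 ≠ j by omega) (show j + 1 + 1 ≠ j + 1 by omega),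
              fv_comp_sw' f (by omega) (by omega : j + 1 < N + 1),
              swx_eq2 (rfl : (j:ℕ)+1 = j+1)]
            have h1 := hjspec.2
            omega
          have hMr : msr (N+1) m ((f ∘ sw (N+1) j) ∘ sw (N+1) (j+1)) < msr (N+1) m f :=
            lt_trans (msr_lt_of_Mval (Mval_sw_desc hdesc_h)) hMh
          have e1 := key (f ∘ sw (N+1) j) hSh hMh (j+1) hk hSr
          have hdup_r : fv ((f ∘ sw (N+1) j) ∘ sw (N+1) (j+1)) (j+1) = fv ((f ∘ sw (N+1) j) ∘ sw (N+1) (j+1)) j := by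
            rw [fv_comp_sw' _ (by omega) (show j + 1 < N + 1 by omega),
              swx_eq1 (rfl : (j:ℕ)+1 = j+1),
              fv_comp_sw' f (by omega) (show j + 1 + 1 < N + 1 by omega),
              swx_eq3 (show j + 1 + 1 ≠ j by omega) (show j + 1 + 1 ≠ j + 1 by omega),
              fv_comp_sw' _ (by omega) (show j < N + 1 by omega),
              swx_eq3 (show j ≠ j + 1 by omega) (show j ≠ j + 1 + 1 by omega),
              fv_comp_sw' f (by omega) (show j < N + 1 by omega), swx_eq1 (rfl : (j:ℕ) = j)]
            exact hdup
          have habs := absorb ((f ∘ sw (N+1) j) ∘ sw (N+1) (j+1)) hSr hMr j (by omega) hdup_r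
          have e1' : Phi Cobj eps' sig' (N+1) m (f ∘ sw (N+1) j) hSh
              = S Cobj sig' (N+1) (j+1) hk ≫ Phi Cobj eps' sig' (N+1) m ((f ∘ sw (N+1) j) ∘ sw (N+1) (j+1)) hSr := by
            rw [e1, ← Category.assoc, hR.R2 hk, Category.id_comp]
          rw [e1']
          rw [← R3a hR hk (by omega)]
          rw [habs]
        · -- I.a.1 : |j - k| ≥ 2
          have hfar : k + 2 ≤ j ∨ j + 2 ≤ k := by omega
          have hdup_h : fv (f ∘ sw (N+1) j) (k+1) = fv (f ∘ sw (N+1) j) k := by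
            rw [fv_comp_sw' f (by omega) (by omega : k + 1 < N + 1),
              swx_eq3 (show k + 1 ≠ j by omega) (show k + 1 ≠ j + 1 by omega),
              fv_comp_sw' f (by omega) (by omega : k < N + 1),
              swx_eq3 (show k ≠ j by omega) (show k ≠ j + 1 by omega)]
            exact hdup
          have habs := absorb (f ∘ sw (N+1) j) hSh hMh k hk hdup_h
          rw [R4s hR (Or.symm hfar) hk (by omega)]
          rw [habs]
    · -- I.b : f has no descent
      have hnd : ∀ i, ¬descAt f i := fun i hi => hdf ⟨i, hi⟩
      have he : ∃ i, dupAt f i := ⟨k, ⟨by omega, hdup⟩⟩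
      have hjspec := Nat.find_spec he
      have hjmin : ∀ i, i < Nat.find he → ¬dupAt f i := fun i hi => Nat.find_min he hi
      have hjk : Nat.find he ≤ k := Nat.find_min' he ⟨by omega, hdup⟩
      obtain ⟨j, hjdef⟩ : ∃ j, Nat.find he = j := ⟨_, rfl⟩
      rw [hjdef] at hjspec hjmin hjk
      have hj1 : j + 1 < N + 1 := hjspec.1
      have hSd : Function.Surjective (del j f) := del_surj hjspec (by omega) hf
      have hMd : msr N m (del j f) < msr (N+1) m f := msr_level f (del j f)
      rw [Phi_dupj Cobj eps' sig' f hf hnd hjspec hjmin (by omega) hSd]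
      by_cases hjkeq : j = k
      · subst hjkeq
        exact (R8a hR (by omega) hk _).symm
      · by_cases hjk1 : j + 1 = k
        · -- I.b.2 : triple value
          subst hjk1
          obtain ⟨N', rfl⟩ : ∃ N', N = N' + 1 := ⟨N - 1, by omega⟩
          have hdup_d : dupAt (del j f) j := by
            refine ⟨by omega, ?_⟩
            rw [fv_del f (by omega : j + 1 < N' + 1), if_neg (by omega),
              fv_del f (by omega : j < N' + 1), if_pos (le_refl j)]
            have h1 := hjspec.2
            have h2 := hdup
            omega
          have hnd_d : ∀ i, ¬descAt (del j f) i := del_no_desc hnd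
          have hmin_d : ∀ i, i < j → ¬dupAt (del j f) i := by
            intro i hij hdd
            obtain ⟨hb, hlt⟩ := hdd
            rw [fv_del f (by omega), if_pos (by omega), fv_del f (by omega), if_pos (by omega)] at hlt
            exact hjmin i hij ⟨by omega, hlt⟩
          have hSd2 : Function.Surjective (del j (del j f)) := del_surj hdup_d (by omega) hSd
          rw [Phi_dupj Cobj eps' sig' (del j f) hSd hnd_d hdup_d hmin_d (by omega) hSd2]
          rw [R1a hR (le_refl j) (by omega) (by omega) (by omega) (by omega)]
          exact (R8a hR (by omega) hk _).symm
        · -- I.b.3 : j + 2 ≤ k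
          obtain ⟨k', rfl⟩ : ∃ k', k = k' + 1 := ⟨k - 1, by omega⟩
          have hdup_d : fv (del j f) (k'+1) = fv (del j f) k' := by
            rw [fv_del f (by omega : k' + 1 < N), if_neg (by omega),
              fv_del f (by omega : k' < N), if_neg (by omega)]
            exact hdup
          have habs := absorb (del j f) hSd hMd k' (by omega) hdup_d
          rw [← R6a hR (show j < k' by omega) (by omega) (by omega) (by omega)]
          rw [habs]
  -- ================== CASE III : k is an ascent of f =====================
  · by_cases hbelow : ∀ i, i < k → ¬descAt f i
    · -- III.a : no descent of f strictly before k : g has least descent k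
      have hgd : descAt (f ∘ sw (N+1) k) k := by
        refine ⟨by omega, ?_⟩
        rw [fv_comp_sw' f hk (by omega : k + 1 < N + 1), swx_eq2 (rfl : (k:ℕ)+1 = k+1),
          fv_comp_sw' f hk (by omega : k < N + 1), swx_eq1 (rfl : (k:ℕ) = k)]
        exact hasc
      have hgmin : ∀ i, i < k → ¬descAt (f ∘ sw (N+1) k) i := by
        intro i hik hdd
        obtain ⟨hb, hlt⟩ := hdd
        rw [fv_comp_sw' f hk (by omega : i + 1 < N + 1),
          fv_comp_sw' f hk (by omega : i < N + 1),
          swx_eq3 (show i ≠ k by omega) (show i ≠ k + 1 by omega)] at hlt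
        by_cases hik1 : i + 1 = k
        · rw [hik1, swx_eq1 (rfl : (k:ℕ) = k)] at hlt
          have h1 := hbelow i hik
          unfold descAt at h1
          have hstep : fv f i ≤ fv f (i+1) := by omega
          have hasc' : fv f (i+1) < fv f (i+1+1) := by rw [hik1]; exact hasc
          have hlt' : fv f (i+1+1) < fv f i := by
            rw [hik1]
            exact hlt
          omega
        · rw [swx_eq3 (show i + 1 ≠ k by omega) (show i + 1 ≠ k + 1 by omega)] at hlt
          exact hbelow i hik ⟨by omega, hlt⟩
      rw [Phi_descj Cobj eps' sig' (f ∘ sw (N+1) k) hg hgd hgmin hk (hg.comp (sw_surj _ _))]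
      rw [Phi_congr Cobj eps' sig' (comp_sw_invol f k) (hg.comp (sw_surj _ _)) hf]
    · -- III.b : f has a descent before k
      push_neg at hbelow
      obtain ⟨i0, hi0k, hi0⟩ := hbelow
      have hd : ∃ i, descAt f i := ⟨i0, hi0⟩
      have hjspec := Nat.find_spec hd
      have hjmin : ∀ i, i < Nat.find hd → ¬descAt f i := fun i hi => Nat.find_min hd hi
      have hjk : Nat.find hd ≤ i0 := Nat.find_min' hd hi0
      obtain ⟨j, hjdef⟩ : ∃ j, Nat.find hd = j := ⟨_, rfl⟩
      rw [hjdef] at hjspec hjmin hjk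
      have hj1 : j + 1 < N + 1 := hjspec.1
      have hjklt : j < k := by omega
      have hMh : msr (N+1) m (f ∘ sw (N+1) j) < msr (N+1) m f := msr_lt_of_Mval (Mval_sw_desc hjspec)
      have hSh : Function.Surjective (f ∘ sw (N+1) j) := hf.comp (sw_surj _ _)
      by_cases hjk1 : j + 1 = k
      · -- III.b.2
        subst hjk1
        by_cases hbc : fv f (j+1+1) < fv f j
        · -- III.b.2.ii
          have hS2 : Function.Surjective ((f ∘ sw (N+1) j) ∘ sw (N+1) (j+1)) := hSh.comp (sw_surj _ _)
          have hS3 : Function.Surjective (((f ∘ sw (N+1) j) ∘ sw (N+1) (j+1)) ∘ sw (N+1) j) := hS2.comp (sw_surj _ _)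
          have hS4 : Function.Surjective ((((f ∘ sw (N+1) j) ∘ sw (N+1) (j+1)) ∘ sw (N+1) j) ∘ sw (N+1) (j+1)) := hS3.comp (sw_surj _ _)
          have hM2 : msr (N+1) m ((f ∘ sw (N+1) j) ∘ sw (N+1) (j+1)) < msr (N+1) m f := by
            apply msr_lt_of_Mval
            apply Mval_lt j (by omega)
            · intro x hx
              rw [fv_comp_sw' _ (by omega) (by omega : x < N + 1),
                swx_eq3 (show x ≠ j + 1 by omega) (show x ≠ j + 1 + 1 by omega),
                fv_comp_sw' f (by omega) (by omega : x < N + 1),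
                swx_eq3 (show x ≠ j by omega) (show x ≠ j + 1 by omega)]
            · rw [fv_comp_sw' _ (by omega) (by omega : j < N + 1),
                swx_eq3 (show j ≠ j + 1 by omega) (show j ≠ j + 1 + 1 by omega),
                fv_comp_sw' f (by omega) (by omega : j < N + 1), swx_eq1 (rfl : (j:ℕ) = j)]
              exact hjspec.2
          have hM3 : msr (N+1) m (((f ∘ sw (N+1) j) ∘ sw (N+1) (j+1)) ∘ sw (N+1) j) < msr (N+1) m f := by
            apply msr_lt_of_Mval
            apply Mval_lt j (by omega)
            · intro x hx
              rw [fv_comp_sw' _ (by omega) (by omega : x < N + 1),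
                swx_eq3 (show x ≠ j by omega) (show x ≠ j + 1 by omega),
                fv_comp_sw' _ (by omega) (by omega : x < N + 1),
                swx_eq3 (show x ≠ j + 1 by omega) (show x ≠ j + 1 + 1 by omega),
                fv_comp_sw' f (by omega) (by omega : x < N + 1),
                swx_eq3 (show x ≠ j by omega) (show x ≠ j + 1 by omega)]
            · rw [fv_comp_sw' _ (by omega) (by omega : j < N + 1), swx_eq1 (rfl : (j:ℕ) = j),
                fv_comp_sw' _ (by omega) (by omega : j + 1 < N + 1), swx_eq1 (rfl : (j:ℕ)+1 = j+1),
                fv_comp_sw' f (by omega) (by omega : j + 1 + 1 < N + 1),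
                swx_eq3 (show j + 1 + 1 ≠ j by omega) (show j + 1 + 1 ≠ j + 1 by omega)]
              exact hbc
          have e1 := key (f ∘ sw (N+1) j) hSh hMh (j+1) hk hS2
          have e2 := key ((f ∘ sw (N+1) j) ∘ sw (N+1) (j+1)) hS2 hM2 j (by omega) hS3
          have e3 := key (((f ∘ sw (N+1) j) ∘ sw (N+1) (j+1)) ∘ sw (N+1) j) hS3 hM3 (j+1) hk hS4
          have hgd : descAt (f ∘ sw (N+1) (j+1)) j := by
            refine ⟨by omega, ?_⟩
            rw [fv_comp_sw' f hk (by omega : j + 1 < N + 1), swx_eq1 (rfl : (j:ℕ)+1 = j+1),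
              fv_comp_sw' f hk (by omega : j < N + 1),
              swx_eq3 (show j ≠ j + 1 by omega) (show j ≠ j + 1 + 1 by omega)]
            exact hbc
          have hgmin : ∀ i, i < j → ¬descAt (f ∘ sw (N+1) (j+1)) i := by
            intro i hij hdd
            obtain ⟨hb, hlt⟩ := hdd
            rw [fv_comp_sw' f hk (by omega : i + 1 < N + 1),
              swx_eq3 (show i + 1 ≠ j + 1 by omega) (show i + 1 ≠ j + 1 + 1 by omega),
              fv_comp_sw' f hk (by omega : i < N + 1),
              swx_eq3 (show i ≠ j + 1 by omega) (show i ≠ j + 1 + 1 by omega)] at hlt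
            exact hjmin i hij ⟨by omega, hlt⟩
          have hSg2 : Function.Surjective ((f ∘ sw (N+1) (j+1)) ∘ sw (N+1) j) := hg.comp (sw_surj _ _)
          rw [Phi_descj Cobj eps' sig' (f ∘ sw (N+1) (j+1)) hg hgd hgmin (by omega) hSg2]
          calc S Cobj sig' (N+1) j (by omega) ≫ Phi Cobj eps' sig' (N+1) m ((f ∘ sw (N+1) (j+1)) ∘ sw (N+1) j) hSg2
              = S Cobj sig' (N+1) j (by omega) ≫ Phi Cobj eps' sig' (N+1) m ((((f ∘ sw (N+1) j) ∘ sw (N+1) (j+1)) ∘ sw (N+1) j) ∘ sw (N+1) (j+1)) hS4 := by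
                rw [Phi_congr Cobj eps' sig' (comp_word4 f (by omega)) hS4 hSg2]
            _ = S Cobj sig' (N+1) j (by omega) ≫ S Cobj sig' (N+1) (j+1) hk ≫ Phi Cobj eps' sig' (N+1) m (((f ∘ sw (N+1) j) ∘ sw (N+1) (j+1)) ∘ sw (N+1) j) hS3 := by rw [e3]
            _ = S Cobj sig' (N+1) j (by omega) ≫ S Cobj sig' (N+1) (j+1) hk ≫ S Cobj sig' (N+1) j (by omega) ≫ Phi Cobj eps' sig' (N+1) m ((f ∘ sw (N+1) j) ∘ sw (N+1) (j+1)) hS2 := by rw [e2]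
            _ = S Cobj sig' (N+1) j (by omega) ≫ S Cobj sig' (N+1) (j+1) hk ≫ S Cobj sig' (N+1) j (by omega) ≫ S Cobj sig' (N+1) (j+1) hk ≫ Phi Cobj eps' sig' (N+1) m (f ∘ sw (N+1) j) hSh := by rw [e1]
            _ = S Cobj sig' (N+1) (j+1) hk ≫ S Cobj sig' (N+1) j (by omega) ≫ Phi Cobj eps' sig' (N+1) m (f ∘ sw (N+1) j) hSh :=
                braid4 hR hk (by omega) _
            _ = S Cobj sig' (N+1) (j+1) hk ≫ Phi Cobj eps' sig' (N+1) m f hf := by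
                rw [← Phi_descj Cobj eps' sig' f hf hjspec hjmin (by omega) hSh]
        · -- III.b.2.i : f(j) ≤ f(j+2) : least descent of g is j+1 = k
          have hgd : descAt (f ∘ sw (N+1) (j+1)) (j+1) := by
            refine ⟨by omega, ?_⟩
            rw [fv_comp_sw' f hk (by omega : j + 1 + 1 < N + 1),
              swx_eq2 (rfl : (j:ℕ)+1+1 = j+1+1),
              fv_comp_sw' f hk (by omega : j + 1 < N + 1), swx_eq1 (rfl : (j:ℕ)+1 = j+1)]
            exact hasc
          have hgmin : ∀ i, i < j + 1 → ¬descAt (f ∘ sw (N+1) (j+1)) i := by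
            intro i hij hdd
            obtain ⟨hb, hlt⟩ := hdd
            rw [fv_comp_sw' f hk (by omega : i < N + 1),
              swx_eq3 (show i ≠ j + 1 by omega) (show i ≠ j + 1 + 1 by omega)] at hlt
            by_cases hij1 : i + 1 = j + 1
            · rw [hij1, fv_comp_sw' f hk (show j + 1 < N + 1 by omega),
                swx_eq1 (rfl : (j:ℕ)+1 = j+1)] at hlt
              have hij' : i = j := by omega
              rw [hij'] at hlt
              exact hbc hlt
            · rw [fv_comp_sw' f hk (by omega : i + 1 < N + 1),
                swx_eq3 (show i + 1 ≠ j + 1 by omega) (show i + 1 ≠ j + 1 + 1 by omega)] at hlt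
              exact hjmin i (by omega) ⟨by omega, hlt⟩
          rw [Phi_descj Cobj eps' sig' (f ∘ sw (N+1) (j+1)) hg hgd hgmin hk (hg.comp (sw_surj _ _))]
          rw [Phi_congr Cobj eps' sig' (comp_sw_invol f (j+1)) (hg.comp (sw_surj _ _)) hf]
      · -- III.b.1 : j + 2 ≤ k
        have hjk2 : j + 2 ≤ k := by omega
        have hgd : descAt (f ∘ sw (N+1) k) j := by
          refine ⟨by omega, ?_⟩
          rw [fv_comp_sw' f hk (by omega : j + 1 < N + 1),
            swx_eq3 (show j + 1 ≠ k by omega) (show j + 1 ≠ k + 1 by omega),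
            fv_comp_sw' f hk (by omega : j < N + 1),
            swx_eq3 (show j ≠ k by omega) (show j ≠ k + 1 by omega)]
          exact hjspec.2
        have hgmin : ∀ i, i < j → ¬descAt (f ∘ sw (N+1) k) i := by
          intro i hij hdd
          obtain ⟨hb, hlt⟩ := hdd
          rw [fv_comp_sw' f hk (by omega : i + 1 < N + 1),
            swx_eq3 (show i + 1 ≠ k by omega) (show i + 1 ≠ k + 1 by omega),
            fv_comp_sw' f hk (by omega : i < N + 1),
            swx_eq3 (show i ≠ k by omega) (show i ≠ k + 1 by omega)] at hlt
          exact hjmin i hij ⟨by omega, hlt⟩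
        have hSg2 : Function.Surjective ((f ∘ sw (N+1) k) ∘ sw (N+1) j) := hg.comp (sw_surj _ _)
        have hShk : Function.Surjective ((f ∘ sw (N+1) j) ∘ sw (N+1) k) := hSh.comp (sw_surj _ _)
        rw [Phi_descj Cobj eps' sig' (f ∘ sw (N+1) k) hg hgd hgmin (by omega) hSg2]
        calc S Cobj sig' (N+1) j (by omega) ≫ Phi Cobj eps' sig' (N+1) m ((f ∘ sw (N+1) k) ∘ sw (N+1) j) hSg2
            = S Cobj sig' (N+1) j (by omega) ≫ Phi Cobj eps' sig' (N+1) m ((f ∘ sw (N+1) j) ∘ sw (N+1) k) hShk := by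
              rw [Phi_congr Cobj eps' sig' (comp_sw_comm f (by omega) hk hjk2) hShk hSg2]
          _ = S Cobj sig' (N+1) j (by omega) ≫ S Cobj sig' (N+1) k hk ≫ Phi Cobj eps' sig' (N+1) m (f ∘ sw (N+1) j) hSh := by
              rw [key (f ∘ sw (N+1) j) hSh hMh k hk hShk]
          _ = S Cobj sig' (N+1) k hk ≫ S Cobj sig' (N+1) j (by omega) ≫ Phi Cobj eps' sig' (N+1) m (f ∘ sw (N+1) j) hSh :=
              (R4a hR hjk2 hk (by omega) _).symm
          _ = S Cobj sig' (N+1) k hk ≫ Phi Cobj eps' sig' (N+1) m f hf := by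
              rw [← Phi_descj Cobj eps' sig' f hf hjspec hjmin (by omega) hSh]

end L1sec

section L2sec

variable {𝒞 : Type*} [Category 𝒞] {Cobj : ℕ → 𝒞}
  {eps' : ∀ (n i : ℕ), 1 ≤ i → i ≤ n → (Cobj (n + 1) ⟶ Cobj n)}
  {sig' : ∀ (n i : ℕ), 1 ≤ i → i + 1 ≤ n → (Cobj n ⟶ Cobj n)}

theorem L2 (hR : GoodRel Cobj eps' sig') (μ : ℕ) :
    ∀ {n m : ℕ} (f : Fin n → Fin m) (hf : Function.Surjective f), msr n m f ≤ μ →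
    ∀ (k : ℕ) (hk : k + 1 ≤ n) (hg : Function.Surjective (f ∘ ef n k hk)),
    Phi Cobj eps' sig' (n+1) m (f ∘ ef n k hk) hg = E Cobj eps' n k hk ≫ Phi Cobj eps' sig' n m f hf := by
  induction μ using Nat.strong_induction_on with
  | _ μ IH =>
  intro n m f hf hμ k hk hg
  have key2 : ∀ (f' : Fin n → Fin m) (hf' : Function.Surjective f'),
      msr n m f' < msr n m f →
      ∀ (k' : ℕ) (hk' : k' + 1 ≤ n) (hg' : Function.Surjective (f' ∘ ef n k' hk')),
      Phi Cobj eps' sig' (n+1) m (f' ∘ ef n k' hk') hg' = E Cobj eps' n k' hk' ≫ Phi Cobj eps' sig' n m f' hf' :=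
    fun f' hf' hlt k' hk' hg' => IH (msr n m f') (by omega) f' hf' le_rfl k' hk' hg'
  have keyd : ∀ {n' : ℕ} (hn : n = n' + 1) (f' : Fin n' → Fin m) (hf' : Function.Surjective f'),
      ∀ (k' : ℕ) (hk' : k' + 1 ≤ n') (hg' : Function.Surjective (f' ∘ ef n' k' hk')),
      Phi Cobj eps' sig' (n'+1) m (f' ∘ ef n' k' hk') hg' = E Cobj eps' n' k' hk' ≫ Phi Cobj eps' sig' n' m f' hf' := by
    intro n' hn f' hf' k' hk' hg'
    subst hn
    exact IH (msr n' m f') (by have := msr_level (f := f) (d := f'); omega) f' hf' le_rfl k' hk' hg'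
  by_cases hdf : ∃ i, descAt f i
  · -- f has a descent
    have hjspec := Nat.find_spec hdf
    have hjmin : ∀ i, i < Nat.find hdf → ¬descAt f i := fun i hi => Nat.find_min hdf hi
    obtain ⟨j, hjdef⟩ : ∃ j, Nat.find hdf = j := ⟨_, rfl⟩
    rw [hjdef] at hjspec hjmin
    have hj1 : j + 1 < n := hjspec.1
    have hMh : msr n m (f ∘ sw n j) < msr n m f := msr_lt_of_Mval (Mval_sw_desc hjspec)
    have hSh : Function.Surjective (f ∘ sw n j) := hf.comp (sw_surj _ _)
    obtain ⟨N, rfl⟩ : ∃ N, n = N + 1 := ⟨n - 1, by omega⟩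
    by_cases ha4 : k < j
    · -- (a4) : the descent is beyond k : least descent of g is j+1
      have hgd : descAt (f ∘ ef (N+1) k hk) (j+1) := by
        refine ⟨by omega, ?_⟩
        rw [fv_comp_ef' f hk (by omega), fv_comp_ef' f hk (by omega),
          show efx k (j+1) = j from efx_eq_hi (by omega),
          show efx k (j+1+1) = j + 1 from efx_eq_hi (by omega)]
        exact hjspec.2
      have hgmin : ∀ i, i < j + 1 → ¬descAt (f ∘ ef (N+1) k hk) i := by
        rintro i hij ⟨hb, hlt⟩
        rw [fv_comp_ef' f hk (by omega), fv_comp_ef' f hk (by omega)] at hlt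
        by_cases h1 : i + 1 ≤ k
        · rw [efx_eq_lo h1, efx_eq_lo (by omega)] at hlt
          exact hjmin i (by omega) ⟨by omega, hlt⟩
        · by_cases h2 : i = k
          · subst h2
            rw [efx_eq_lo (le_refl i), show efx i (i+1) = i from efx_eq_hi (le_refl i)] at hlt
            omega
          · obtain ⟨y, rfl⟩ : ∃ y, i = y + 1 := ⟨i - 1, by omega⟩
            rw [show efx k (y+1) = y from efx_eq_hi (by omega),
              show efx k (y+1+1) = y + 1 from efx_eq_hi (by omega)] at hlt
            exact hjmin y (by omega) ⟨by omega, hlt⟩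
      have hSg2 : Function.Surjective ((f ∘ ef (N+1) k hk) ∘ sw (N+2) (j+1)) := hg.comp (sw_surj _ _)
      rw [Phi_descj Cobj eps' sig' (f ∘ ef (N+1) k hk) hg hgd hgmin (by omega) hSg2]
      have hSh2 : Function.Surjective ((f ∘ sw (N+1) j) ∘ ef (N+1) k hk) := hSh.comp (ef_surj _ _ _)
      calc S Cobj sig' (N+2) (j+1) (by omega) ≫ Phi Cobj eps' sig' (N+2) m ((f ∘ ef (N+1) k hk) ∘ sw (N+2) (j+1)) hSg2
          = S Cobj sig' (N+2) (j+1) (by omega) ≫ Phi Cobj eps' sig' (N+2) m ((f ∘ sw (N+1) j) ∘ ef (N+1) k hk) hSh2 := by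
            rw [Phi_congr Cobj eps' sig' (ef_comp_sw_high f hk ha4 (by omega)) hSg2 hSh2]
        _ = S Cobj sig' (N+2) (j+1) (by omega) ≫ E Cobj eps' (N+1) k hk ≫ Phi Cobj eps' sig' (N+1) m (f ∘ sw (N+1) j) hSh := by
            rw [key2 (f ∘ sw (N+1) j) hSh hMh k hk hSh2]
        _ = E Cobj eps' (N+1) k hk ≫ S Cobj sig' (N+1) j (by omega) ≫ Phi Cobj eps' sig' (N+1) m (f ∘ sw (N+1) j) hSh :=
            (R6a hR ha4 (by omega) hk (by omega) _).symm
        _ = E Cobj eps' (N+1) k hk ≫ Phi Cobj eps' sig' (N+1) m f hf := by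
            rw [← Phi_descj Cobj eps' sig' f hf hjspec hjmin (by omega) hSh]
    · by_cases ha3 : k = j
      · -- (a3) : least descent exactly at k
        subst ha3
        have hgd : descAt (f ∘ ef (N+1) k hk) (k+1) := by
          refine ⟨by omega, ?_⟩
          rw [fv_comp_ef' f hk (by omega), fv_comp_ef' f hk (by omega),
            show efx k (k+1) = k from efx_eq_hi (le_refl k),
            show efx k (k+1+1) = k + 1 from efx_eq_hi (by omega)]
          exact hjspec.2
        have hgmin : ∀ i, i < k + 1 → ¬descAt (f ∘ ef (N+1) k hk) i := by
          rintro i hij ⟨hb, hlt⟩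
          rw [fv_comp_ef' f hk (by omega), fv_comp_ef' f hk (by omega)] at hlt
          by_cases h1 : i + 1 ≤ k
          · rw [efx_eq_lo h1, efx_eq_lo (by omega)] at hlt
            exact hjmin i (by omega) ⟨by omega, hlt⟩
          · have h2 : i = k := by omega
            subst h2
            rw [efx_eq_lo (le_refl i), show efx i (i+1) = i from efx_eq_hi (le_refl i)] at hlt
            omega
        have hSg2 : Function.Surjective ((f ∘ ef (N+1) k hk) ∘ sw (N+2) (k+1)) := hg.comp (sw_surj _ _)
        rw [Phi_descj Cobj eps' sig' (f ∘ ef (N+1) k hk) hg hgd hgmin (by omega) hSg2]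
        -- second unfolding at descent k
        have hgd2 : descAt ((f ∘ ef (N+1) k hk) ∘ sw (N+2) (k+1)) k := by
          refine ⟨by omega, ?_⟩
          rw [fv_comp_sw' (f ∘ ef (N+1) k hk) (by omega) (by omega : k + 1 < N + 2),
            swx_eq1 (rfl : (k:ℕ)+1 = k+1),
            fv_comp_sw' (f ∘ ef (N+1) k hk) (by omega) (by omega : k < N + 2),
            swx_eq3 (show k ≠ k + 1 by omega) (show k ≠ k + 1 + 1 by omega),
            fv_comp_ef' f hk (by omega), fv_comp_ef' f hk (by omega),
            efx_eq_lo (le_refl k),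
            show efx k (k+1+1) = k + 1 from efx_eq_hi (by omega)]
          exact hjspec.2
        have hgmin2 : ∀ i, i < k → ¬descAt ((f ∘ ef (N+1) k hk) ∘ sw (N+2) (k+1)) i := by
          rintro i hij ⟨hb, hlt⟩
          rw [fv_comp_sw' (f ∘ ef (N+1) k hk) (by omega) (by omega : i + 1 < N + 2),
            swx_eq3 (show i + 1 ≠ k + 1 by omega) (show i + 1 ≠ k + 1 + 1 by omega),
            fv_comp_sw' (f ∘ ef (N+1) k hk) (by omega) (by omega : i < N + 2),
            swx_eq3 (show i ≠ k + 1 by omega) (show i ≠ k + 1 + 1 by omega),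
            fv_comp_ef' f hk (by omega), fv_comp_ef' f hk (by omega),
            efx_eq_lo (by omega), efx_eq_lo (by omega)] at hlt
          exact hjmin i (by omega) ⟨by omega, hlt⟩
        have hSg3 : Function.Surjective (((f ∘ ef (N+1) k hk) ∘ sw (N+2) (k+1)) ∘ sw (N+2) k) := hSg2.comp (sw_surj _ _)
        rw [Phi_descj Cobj eps' sig' ((f ∘ ef (N+1) k hk) ∘ sw (N+2) (k+1)) hSg2 hgd2 hgmin2 (by omega) hSg3]
        have hSh2 : Function.Surjective ((f ∘ sw (N+1) k) ∘ ef (N+1) (k+1) (by omega)) := hSh.comp (ef_surj _ _ _)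
        calc S Cobj sig' (N+2) (k+1) (by omega) ≫ S Cobj sig' (N+2) k (by omega) ≫ Phi Cobj eps' sig' (N+2) m (((f ∘ ef (N+1) k hk) ∘ sw (N+2) (k+1)) ∘ sw (N+2) k) hSg3
            = S Cobj sig' (N+2) (k+1) (by omega) ≫ S Cobj sig' (N+2) k (by omega) ≫ Phi Cobj eps' sig' (N+2) m ((f ∘ sw (N+1) k) ∘ ef (N+1) (k+1) (by omega)) hSh2 := by
              rw [Phi_congr Cobj eps' sig' (ef_comp_F7 f hk (by omega)) hSg3 hSh2]
          _ = S Cobj sig' (N+2) (k+1) (by omega) ≫ S Cobj sig' (N+2) k (by omega) ≫ E Cobj eps' (N+1) (k+1) (by omega) ≫ Phi Cobj eps' sig' (N+1) m (f ∘ sw (N+1) k) hSh := by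
              rw [key2 (f ∘ sw (N+1) k) hSh hMh (k+1) (by omega) hSh2]
          _ = E Cobj eps' (N+1) k hk ≫ S Cobj sig' (N+1) k (by omega) ≫ Phi Cobj eps' sig' (N+1) m (f ∘ sw (N+1) k) hSh :=
              (R7a hR (by omega) hk (by omega) (by omega) (by omega) _).symm
          _ = E Cobj eps' (N+1) k hk ≫ Phi Cobj eps' sig' (N+1) m f hf := by
              rw [← Phi_descj Cobj eps' sig' f hf hjspec hjmin (by omega) hSh]
      · by_cases ha2 : j + 1 = k
        · -- (a2) : least descent at k-1
          subst ha2
          have hgd : descAt (f ∘ ef (N+1) (j+1) hk) j := by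
            refine ⟨by omega, ?_⟩
            rw [fv_comp_ef' f hk (by omega), fv_comp_ef' f hk (by omega),
              efx_eq_lo (by omega), efx_eq_lo (by omega)]
            exact hjspec.2
          have hgmin : ∀ i, i < j → ¬descAt (f ∘ ef (N+1) (j+1) hk) i := by
            rintro i hij ⟨hb, hlt⟩
            rw [fv_comp_ef' f hk (by omega), fv_comp_ef' f hk (by omega),
              efx_eq_lo (by omega), efx_eq_lo (by omega)] at hlt
            exact hjmin i (by omega) ⟨by omega, hlt⟩
          have hSg2 : Function.Surjective ((f ∘ ef (N+1) (j+1) hk) ∘ sw (N+2) j) := hg.comp (sw_surj _ _)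
          rw [Phi_descj Cobj eps' sig' (f ∘ ef (N+1) (j+1) hk) hg hgd hgmin (by omega) hSg2]
          have hSh2 : Function.Surjective ((f ∘ sw (N+1) j) ∘ ef (N+1) j (by omega)) := hSh.comp (ef_surj _ _ _)
          have hSh3 : Function.Surjective (((f ∘ sw (N+1) j) ∘ ef (N+1) j (by omega)) ∘ sw (N+2) (j+1)) := hSh2.comp (sw_surj _ _)
          calc S Cobj sig' (N+2) j (by omega) ≫ Phi Cobj eps' sig' (N+2) m ((f ∘ ef (N+1) (j+1) hk) ∘ sw (N+2) j) hSg2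
              = S Cobj sig' (N+2) j (by omega) ≫ Phi Cobj eps' sig' (N+2) m (((f ∘ sw (N+1) j) ∘ ef (N+1) j (by omega)) ∘ sw (N+2) (j+1)) hSh3 := by
                rw [Phi_congr Cobj eps' sig' (ef_comp_F6 f hk (by omega)) hSg2 hSh3]
            _ = S Cobj sig' (N+2) j (by omega) ≫ S Cobj sig' (N+2) (j+1) (by omega) ≫ Phi Cobj eps' sig' (N+2) m ((f ∘ sw (N+1) j) ∘ ef (N+1) j (by omega)) hSh2 := by
                rw [L1 hR (msr (N+2) m ((f ∘ sw (N+1) j) ∘ ef (N+1) j (by omega))) ((f ∘ sw (N+1) j) ∘ ef (N+1) j (by omega)) hSh2 le_rfl (j+1) (by omega) hSh3]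
            _ = S Cobj sig' (N+2) j (by omega) ≫ S Cobj sig' (N+2) (j+1) (by omega) ≫ E Cobj eps' (N+1) j (by omega) ≫ Phi Cobj eps' sig' (N+1) m (f ∘ sw (N+1) j) hSh := by
                rw [key2 (f ∘ sw (N+1) j) hSh hMh j (by omega) hSh2]
            _ = E Cobj eps' (N+1) (j+1) hk ≫ S Cobj sig' (N+1) j (by omega) ≫ Phi Cobj eps' sig' (N+1) m (f ∘ sw (N+1) j) hSh :=
                (R9a hR (by omega) (by omega) (by omega) (by omega) _).symm
            _ = E Cobj eps' (N+1) (j+1) hk ≫ Phi Cobj eps' sig' (N+1) m f hf := by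
                rw [← Phi_descj Cobj eps' sig' f hf hjspec hjmin (by omega) hSh]
        · -- (a1) : j + 2 ≤ k
          have hjk2 : j + 2 ≤ k := by omega
          have hgd : descAt (f ∘ ef (N+1) k hk) j := by
            refine ⟨by omega, ?_⟩
            rw [fv_comp_ef' f hk (by omega), fv_comp_ef' f hk (by omega),
              efx_eq_lo (by omega), efx_eq_lo (by omega)]
            exact hjspec.2
          have hgmin : ∀ i, i < j → ¬descAt (f ∘ ef (N+1) k hk) i := by
            rintro i hij ⟨hb, hlt⟩
            rw [fv_comp_ef' f hk (by omega), fv_comp_ef' f hk (by omega),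
              efx_eq_lo (by omega), efx_eq_lo (by omega)] at hlt
            exact hjmin i (by omega) ⟨by omega, hlt⟩
          have hSg2 : Function.Surjective ((f ∘ ef (N+1) k hk) ∘ sw (N+2) j) := hg.comp (sw_surj _ _)
          rw [Phi_descj Cobj eps' sig' (f ∘ ef (N+1) k hk) hg hgd hgmin (by omega) hSg2]
          have hSh2 : Function.Surjective ((f ∘ sw (N+1) j) ∘ ef (N+1) k hk) := hSh.comp (ef_surj _ _ _)
          calc S Cobj sig' (N+2) j (by omega) ≫ Phi Cobj eps' sig' (N+2) m ((f ∘ ef (N+1) k hk) ∘ sw (N+2) j) hSg2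
              = S Cobj sig' (N+2) j (by omega) ≫ Phi Cobj eps' sig' (N+2) m ((f ∘ sw (N+1) j) ∘ ef (N+1) k hk) hSh2 := by
                rw [Phi_congr Cobj eps' sig' (ef_comp_sw_low f hk hjk2 (by omega)) hSg2 hSh2]
            _ = S Cobj sig' (N+2) j (by omega) ≫ E Cobj eps' (N+1) k hk ≫ Phi Cobj eps' sig' (N+1) m (f ∘ sw (N+1) j) hSh := by
                rw [key2 (f ∘ sw (N+1) j) hSh hMh k hk hSh2]
            _ = E Cobj eps' (N+1) k hk ≫ S Cobj sig' (N+1) j (by omega) ≫ Phi Cobj eps' sig' (N+1) m (f ∘ sw (N+1) j) hSh :=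
                (R5a hR hjk2 hk (by omega) (by omega) _).symm
            _ = E Cobj eps' (N+1) k hk ≫ Phi Cobj eps' sig' (N+1) m f hf := by
                rw [← Phi_descj Cobj eps' sig' f hf hjspec hjmin (by omega) hSh]
  · -- f has no descent
    have hnd : ∀ i, ¬descAt f i := fun i hi => hdf ⟨i, hi⟩
    obtain ⟨N, rfl⟩ : ∃ N, n = N + 1 := ⟨n - 1, by omega⟩
    have hgnd : ∀ i, ¬descAt (f ∘ ef (N+1) k hk) i := comp_ef_no_desc hk hnd
    by_cases hlow : ∃ i, i < k ∧ dupAt f i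
    · -- (b1)
      obtain ⟨i0, hi0k, hi0⟩ := hlow
      have he : ∃ i, dupAt f i := ⟨i0, hi0⟩
      have hjspec := Nat.find_spec he
      have hjmin : ∀ i, i < Nat.find he → ¬dupAt f i := fun i hi => Nat.find_min he hi
      have hjk : Nat.find he ≤ i0 := Nat.find_min' he hi0
      obtain ⟨j, hjdef⟩ : ∃ j, Nat.find he = j := ⟨_, rfl⟩
      rw [hjdef] at hjspec hjmin hjk
      have hjklt : j < k := by omega
      have hj1 : j + 1 < N + 1 := hjspec.1
      obtain ⟨k', rfl⟩ : ∃ k', k = k' + 1 := ⟨k - 1, by omega⟩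
      have hgdup : dupAt (f ∘ ef (N+1) (k'+1) hk) j := by
        refine ⟨by omega, ?_⟩
        rw [fv_comp_ef' f hk (by omega), fv_comp_ef' f hk (by omega),
          efx_eq_lo (by omega), efx_eq_lo (by omega)]
        exact hjspec.2
      have hgmin : ∀ i, i < j → ¬dupAt (f ∘ ef (N+1) (k'+1) hk) i := by
        rintro i hij ⟨hb, hlt⟩
        rw [fv_comp_ef' f hk (by omega), fv_comp_ef' f hk (by omega),
          efx_eq_lo (by omega), efx_eq_lo (by omega)] at hlt
        exact hjmin i (by omega) ⟨by omega, hlt⟩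
      have hSdg : Function.Surjective (del j (f ∘ ef (N+1) (k'+1) hk)) := del_surj hgdup (by omega) hg
      rw [Phi_dupj Cobj eps' sig' (f ∘ ef (N+1) (k'+1) hk) hg hgnd hgdup hgmin (by omega) hSdg]
      have hSd : Function.Surjective (del j f) := del_surj hjspec (by omega) hf
      have hSd2 : Function.Surjective ((del j f) ∘ ef N k' (by omega)) := hSd.comp (ef_surj _ _ _)
      calc E Cobj eps' (N+1) j (by omega) ≫ Phi Cobj eps' sig' (N+1) m (del j (f ∘ ef (N+1) (k'+1) hk)) hSdg
          = E Cobj eps' (N+1) j (by omega) ≫ Phi Cobj eps' sig' (N+1) m ((del j f) ∘ ef N k' (by omega)) hSd2 := by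
            have hdd : fv f (j+1) = fv f j := hjspec.2
            rw [Phi_congr Cobj eps' sig' (del_comp_ef f hk (by omega) (by omega) hdd) hSdg hSd2]
          _ = E Cobj eps' (N+1) j (by omega) ≫ E Cobj eps' N k' (by omega) ≫ Phi Cobj eps' sig' N m (del j f) hSd := by
            rw [keyd rfl (del j f) hSd k' (by omega) hSd2]
          _ = E Cobj eps' (N+1) (k'+1) hk ≫ E Cobj eps' N j (by omega) ≫ Phi Cobj eps' sig' N m (del j f) hSd :=
            R1a hR (by omega) (by omega) (by omega) (by omega) (by omega) _
          _ = E Cobj eps' (N+1) (k'+1) hk ≫ Phi Cobj eps' sig' (N+1) m f hf := by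
            rw [← Phi_dupj Cobj eps' sig' f hf hnd hjspec hjmin (by omega) hSd]
    · -- (b2) : least dup of g is k
      have hnodup : ∀ i, i < k → ¬dupAt f i := by
        intro i hik hdd
        exact hlow ⟨i, hik, hdd⟩
      have hgdup : dupAt (f ∘ ef (N+1) k hk) k := by
        refine ⟨by omega, ?_⟩
        rw [fv_comp_ef' f hk (by omega), fv_comp_ef' f hk (by omega),
          efx_eq_lo (le_refl k), show efx k (k+1) = k from efx_eq_hi (le_refl k)]
      have hgmin : ∀ i, i < k → ¬dupAt (f ∘ ef (N+1) k hk) i := by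
        rintro i hij ⟨hb, hlt⟩
        rw [fv_comp_ef' f hk (by omega), fv_comp_ef' f hk (by omega),
          efx_eq_lo (by omega), efx_eq_lo (by omega)] at hlt
        exact hnodup i hij ⟨by omega, hlt⟩
      have hSdg : Function.Surjective (del k (f ∘ ef (N+1) k hk)) := del_surj hgdup (by omega) hg
      rw [Phi_dupj Cobj eps' sig' (f ∘ ef (N+1) k hk) hg hgnd hgdup hgmin (by omega) hSdg]
      rw [Phi_congr Cobj eps' sig' (del_ef f hk) hSdg hf]

end L2sec

section FinalSec

variable {𝒞 : Type*} [Category 𝒞] {Cobj : ℕ → 𝒞}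
  {eps' : ∀ (n i : ℕ), 1 ≤ i → i ≤ n → (Cobj (n + 1) ⟶ Cobj n)}
  {sig' : ∀ (n i : ℕ), 1 ≤ i → i + 1 ≤ n → (Cobj n ⟶ Cobj n)}

theorem Phi_comp (hR : GoodRel Cobj eps' sig') (μ : ℕ) :
    ∀ {n m p : ℕ} (f : Fin n → Fin m) (hf : Function.Surjective f), msr n m f ≤ μ →
    ∀ (g : Fin m → Fin p) (hgs : Function.Surjective g) (hc : Function.Surjective (g ∘ f)),
    Phi Cobj eps' sig' n p (g ∘ f) hc = Phi Cobj eps' sig' n m f hf ≫ Phi Cobj eps' sig' m p g hgs := by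
  induction μ using Nat.strong_induction_on with
  | _ μ IH =>
  intro n m p f hf hμ g hgs hc
  by_cases hdf : ∃ i, descAt f i
  · have hjspec := Nat.find_spec hdf
    have hjmin : ∀ i, i < Nat.find hdf → ¬descAt f i := fun i hi => Nat.find_min hdf hi
    obtain ⟨j, hjdef⟩ : ∃ j, Nat.find hdf = j := ⟨_, rfl⟩
    rw [hjdef] at hjspec hjmin
    obtain ⟨N, rfl⟩ : ∃ N, n = N + 1 := ⟨n - 1, by have := hjspec.1; omega⟩
    have hj1 : j + 1 < N + 1 := hjspec.1
    have hMh : msr (N+1) m (f ∘ sw (N+1) j) < msr (N+1) m f := msr_lt_of_Mval (Mval_sw_desc hjspec)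
    have hSh : Function.Surjective (f ∘ sw (N+1) j) := hf.comp (sw_surj _ _)
    have hcs : Function.Surjective (g ∘ (f ∘ sw (N+1) j)) := hgs.comp hSh
    have hcs2 : Function.Surjective ((g ∘ (f ∘ sw (N+1) j)) ∘ sw (N+1) j) := hcs.comp (sw_surj _ _)
    have hfunc : (g ∘ (f ∘ sw (N+1) j)) ∘ sw (N+1) j = g ∘ f := by
      show g ∘ ((f ∘ sw (N+1) j) ∘ sw (N+1) j) = g ∘ f
      rw [comp_sw_invol]
    calc Phi Cobj eps' sig' (N+1) p (g ∘ f) hc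
        = Phi Cobj eps' sig' (N+1) p ((g ∘ (f ∘ sw (N+1) j)) ∘ sw (N+1) j) hcs2 :=
          Phi_congr Cobj eps' sig' hfunc.symm hc hcs2
      _ = S Cobj sig' (N+1) j (by omega) ≫ Phi Cobj eps' sig' (N+1) p (g ∘ (f ∘ sw (N+1) j)) hcs :=
          L1 hR (msr (N+1) p (g ∘ (f ∘ sw (N+1) j))) (g ∘ (f ∘ sw (N+1) j)) hcs le_rfl j (by omega) hcs2
      _ = S Cobj sig' (N+1) j (by omega) ≫ Phi Cobj eps' sig' (N+1) m (f ∘ sw (N+1) j) hSh ≫ Phi Cobj eps' sig' m p g hgs := by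
          rw [IH (msr (N+1) m (f ∘ sw (N+1) j)) (by omega) (f ∘ sw (N+1) j) hSh le_rfl g hgs hcs]
      _ = (S Cobj sig' (N+1) j (by omega) ≫ Phi Cobj eps' sig' (N+1) m (f ∘ sw (N+1) j) hSh) ≫ Phi Cobj eps' sig' m p g hgs := by
          rw [Category.assoc]
      _ = Phi Cobj eps' sig' (N+1) m f hf ≫ Phi Cobj eps' sig' m p g hgs := by
          rw [← Phi_descj Cobj eps' sig' f hf hjspec hjmin (by omega) hSh]
  · by_cases he : ∃ i, dupAt f i
    · have hnd : ∀ i, ¬descAt f i := fun i hi => hdf ⟨i, hi⟩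
      have hjspec := Nat.find_spec he
      have hjmin : ∀ i, i < Nat.find he → ¬dupAt f i := fun i hi => Nat.find_min he hi
      obtain ⟨j, hjdef⟩ : ∃ j, Nat.find he = j := ⟨_, rfl⟩
      rw [hjdef] at hjspec hjmin
      obtain ⟨N, rfl⟩ : ∃ N, n = N + 1 := ⟨n - 1, by have := hjspec.1; omega⟩
      have hj1 : j + 1 < N + 1 := hjspec.1
      have hSd : Function.Surjective (del j f) := del_surj hjspec (by omega) hf
      have hcs : Function.Surjective (g ∘ del j f) := hgs.comp hSd
      have hcs2 : Function.Surjective ((g ∘ del j f) ∘ ef N j (by omega)) := hcs.comp (ef_surj _ _ _)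
      have hfunc : (g ∘ del j f) ∘ ef N j (by omega) = g ∘ f := by
        show g ∘ (del j f ∘ ef N j (by omega)) = g ∘ f
        rw [del_factor hjspec (by omega)]
      calc Phi Cobj eps' sig' (N+1) p (g ∘ f) hc
          = Phi Cobj eps' sig' (N+1) p ((g ∘ del j f) ∘ ef N j (by omega)) hcs2 :=
            Phi_congr Cobj eps' sig' hfunc.symm hc hcs2
        _ = E Cobj eps' N j (by omega) ≫ Phi Cobj eps' sig' N p (g ∘ del j f) hcs :=
            L2 hR (msr N p (g ∘ del j f)) (g ∘ del j f) hcs le_rfl j (by omega) hcs2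
        _ = E Cobj eps' N j (by omega) ≫ Phi Cobj eps' sig' N m (del j f) hSd ≫ Phi Cobj eps' sig' m p g hgs := by
            rw [IH (msr N m (del j f)) (by have := msr_level f (del j f); omega) (del j f) hSd le_rfl g hgs hcs]
        _ = (E Cobj eps' N j (by omega) ≫ Phi Cobj eps' sig' N m (del j f) hSd) ≫ Phi Cobj eps' sig' m p g hgs := by
            rw [Category.assoc]
        _ = Phi Cobj eps' sig' (N+1) m f hf ≫ Phi Cobj eps' sig' m p g hgs := by
            rw [← Phi_dupj Cobj eps' sig' f hf hnd hjspec hjmin (by omega) hSd]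
    · have hnd : ∀ i, ¬descAt f i := fun i hi => hdf ⟨i, hi⟩
      have hnu : ∀ i, ¬dupAt f i := fun i hi => he ⟨i, hi⟩
      have hnm : n = m := mono_eq hf hnd hnu
      subst hnm
      have hfi : f = id := mono_id hf hnd hnu
      subst hfi
      rw [Phi_mono_eq Cobj eps' sig' id hf hnd hnu rfl, eqToHom_refl, Category.id_comp]
      exact Phi_congr Cobj eps' sig' rfl hc hgs

lemma swap_eq_sw {n k : ℕ} (h1 : k < n) (h2 : k + 1 < n) :
    ⇑(Equiv.swap (⟨k, h1⟩ : Fin n) ⟨k+1, h2⟩) = sw n k := by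
  funext x
  apply Fin.ext
  rw [sw_val]
  by_cases hx1 : x = (⟨k, h1⟩ : Fin n)
  · rw [hx1, Equiv.swap_apply_left]
    simp [h2]
  · by_cases hx2 : x = (⟨k+1, h2⟩ : Fin n)
    · rw [hx2, Equiv.swap_apply_right]
      have : ¬((k:ℕ) + 1 = k ∧ k + 1 < n) := by omega
      rw [if_neg this, if_pos rfl]
    · rw [Equiv.swap_apply_of_ne_of_ne hx1 hx2]
      have e1 : x.val ≠ k := fun h => hx1 (Fin.ext h)
      have e2 : x.val ≠ k + 1 := fun h => hx2 (Fin.ext h)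
      rw [if_neg (by omega), if_neg e2]

noncomputable def Fctr (_hR : GoodRel Cobj eps' sig') : FinCardS ⥤ 𝒞 where
  obj X := Cobj X.len
  map {X Y} u := Phi Cobj eps' sig' X.len Y.len u.1 u.2
  map_id X := Phi_id Cobj eps' sig' X.len
  map_comp {X Y Z} u v :=
    Phi_comp _hR (msr X.len Y.len u.1) u.1 u.2 le_rfl v.1 v.2 (v.2.comp u.2)

lemma Fctr_map_eps (hR : GoodRel Cobj eps' sig') (n i : ℕ) (h1 : 1 ≤ i) (h2 : i ≤ n) :
    (Fctr hR).map (epsHomS n i h1 h2) = eps' n i h1 h2 := by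
  obtain ⟨k, rfl⟩ : ∃ k, i = k + 1 := ⟨i - 1, by omega⟩
  show Phi Cobj eps' sig' (n+1) n (epsF n (k+1) h1 h2) (epsF_surj n (k+1) h1 h2) = eps' n (k+1) h1 h2
  have hfe : epsF n (k+1) h1 h2 = id ∘ ef n k h2 := rfl
  calc Phi Cobj eps' sig' (n+1) n (epsF n (k+1) h1 h2) (epsF_surj n (k+1) h1 h2)
      = Phi Cobj eps' sig' (n+1) n (id ∘ ef n k h2) (Function.surjective_id.comp (ef_surj n k h2)) :=
        Phi_congr Cobj eps' sig' hfe _ _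
    _ = E Cobj eps' n k h2 ≫ Phi Cobj eps' sig' n n id Function.surjective_id :=
        L2 hR (msr n n (id : Fin n → Fin n)) id Function.surjective_id le_rfl k h2 _
    _ = eps' n (k+1) h1 h2 := by
        rw [Phi_id Cobj eps' sig' n, Category.comp_id]
        rfl

lemma Fctr_map_sigma (hR : GoodRel Cobj eps' sig') (n i : ℕ) (h1 : 1 ≤ i) (h2 : i + 1 ≤ n) :
    (Fctr hR).map (sigmaHomS n i h1 h2) = sig' n i h1 h2 := by
  obtain ⟨k, rfl⟩ : ∃ k, i = k + 1 := ⟨i - 1, by omega⟩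
  have hswap : ⇑(Equiv.swap (⟨k + 1 - 1, by omega⟩ : Fin n) ⟨k + 1, by omega⟩) = sw n k := by
    have hmk : (⟨k + 1 - 1, by omega⟩ : Fin n) = ⟨k, by omega⟩ := Fin.ext (by simp)
    rw [hmk]
    exact swap_eq_sw (by omega) (by omega)
  show Phi Cobj eps' sig' n n (⇑(Equiv.swap (⟨k + 1 - 1, by omega⟩ : Fin n) ⟨k + 1, by omega⟩)) _ = sig' n (k+1) h1 h2
  calc Phi Cobj eps' sig' n n (⇑(Equiv.swap (⟨k + 1 - 1, by omega⟩ : Fin n) ⟨k + 1, by omega⟩)) _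
      = Phi Cobj eps' sig' n n (id ∘ sw n k) (Function.surjective_id.comp (sw_surj n k)) :=
        Phi_congr Cobj eps' sig' (by rw [hswap]; rfl) _ _
    _ = S Cobj sig' n k h2 ≫ Phi Cobj eps' sig' n n id Function.surjective_id :=
        L1 hR (msr n n (id : Fin n → Fin n)) id Function.surjective_id le_rfl k h2 _
    _ = sig' n (k+1) h1 h2 := by
        rw [Phi_id Cobj eps' sig' n, Category.comp_id]
        rfl

theorem Gmap (hR : GoodRel Cobj eps' sig') (G : FinCardS ⥤ 𝒞)
    (hobjG : ∀ n : ℕ, G.obj (FinCardS.of n) = Cobj n)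
    (hepsG : ∀ (n i : ℕ) (h1 : 1 ≤ i) (h2 : i ≤ n),
      G.map (epsHomS n i h1 h2)
        = eqToHom (hobjG (n + 1)) ≫ eps' n i h1 h2 ≫ eqToHom (hobjG n).symm)
    (hsigG : ∀ (n i : ℕ) (h1 : 1 ≤ i) (h2 : i + 1 ≤ n),
      G.map (sigmaHomS n i h1 h2)
        = eqToHom (hobjG n) ≫ sig' n i h1 h2 ≫ eqToHom (hobjG n).symm)
    (μ : ℕ) :
    ∀ {n m : ℕ} (f : Fin n → Fin m) (hf : Function.Surjective f), msr n m f ≤ μ →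
    G.map (⟨f, hf⟩ : FinCardS.of n ⟶ FinCardS.of m)
      = eqToHom (hobjG n) ≫ Phi Cobj eps' sig' n m f hf ≫ eqToHom (hobjG m).symm := by
  induction μ using Nat.strong_induction_on with
  | _ μ IH =>
  intro n m f hf hμ
  by_cases hdf : ∃ i, descAt f i
  · have hjspec := Nat.find_spec hdf
    have hjmin : ∀ i, i < Nat.find hdf → ¬descAt f i := fun i hi => Nat.find_min hdf hi
    obtain ⟨j, hjdef⟩ : ∃ j, Nat.find hdf = j := ⟨_, rfl⟩
    rw [hjdef] at hjspec hjmin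
    obtain ⟨N, rfl⟩ : ∃ N, n = N + 1 := ⟨n - 1, by have := hjspec.1; omega⟩
    have hj1 : j + 1 < N + 1 := hjspec.1
    have hMh : msr (N+1) m (f ∘ sw (N+1) j) < msr (N+1) m f := msr_lt_of_Mval (Mval_sw_desc hjspec)
    have hSh : Function.Surjective (f ∘ sw (N+1) j) := hf.comp (sw_surj _ _)
    have hcomp : (⟨f, hf⟩ : FinCardS.of (N+1) ⟶ FinCardS.of m)
        = sigmaHomS (N+1) (j+1) (by omega) (by omega) ≫ ⟨f ∘ sw (N+1) j, hSh⟩ := by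
      apply Subtype.ext
      show f = (f ∘ sw (N+1) j) ∘ ⇑(Equiv.swap (⟨j + 1 - 1, by omega⟩ : Fin (N+1)) ⟨j + 1, by omega⟩)
      have hmk : (⟨j + 1 - 1, by omega⟩ : Fin (N+1)) = ⟨j, by omega⟩ := Fin.ext (by simp)
      rw [hmk, swap_eq_sw (by omega) (by omega), comp_sw_invol]
    rw [hcomp]
    erw [G.map_comp]
    rw [hsigG (N+1) (j+1) (by omega) (by omega)]
    erw [IH (msr (N+1) m (f ∘ sw (N+1) j)) (by omega) (f ∘ sw (N+1) j) hSh le_rfl,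
      Phi_descj Cobj eps' sig' f hf hjspec hjmin (by omega) hSh]
    simp only [Category.assoc, eqToHom_trans_assoc, eqToHom_refl, Category.id_comp]
    rfl
  · by_cases he : ∃ i, dupAt f i
    · have hnd : ∀ i, ¬descAt f i := fun i hi => hdf ⟨i, hi⟩
      have hjspec := Nat.find_spec he
      have hjmin : ∀ i, i < Nat.find he → ¬dupAt f i := fun i hi => Nat.find_min he hi
      obtain ⟨j, hjdef⟩ : ∃ j, Nat.find he = j := ⟨_, rfl⟩
      rw [hjdef] at hjspec hjmin
      obtain ⟨N, rfl⟩ : ∃ N, n = N + 1 := ⟨n - 1, by have := hjspec.1; omega⟩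
      have hj1 : j + 1 < N + 1 := hjspec.1
      have hSd : Function.Surjective (del j f) := del_surj hjspec (by omega) hf
      have hcomp : (⟨f, hf⟩ : FinCardS.of (N+1) ⟶ FinCardS.of m)
          = epsHomS N (j+1) (by omega) (by omega) ≫ ⟨del j f, hSd⟩ := by
        apply Subtype.ext
        show f = del j f ∘ epsF N (j+1) (by omega) (by omega)
        have : epsF N (j+1) (by omega) (by omega) = ef N j (by omega) := rfl
        rw [this, del_factor hjspec (by omega)]
      rw [hcomp]
      erw [G.map_comp]
      rw [hepsG N (j+1) (by omega) (by omega)]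
      erw [IH (msr N m (del j f)) (by have := msr_level f (del j f); omega) (del j f) hSd le_rfl,
        Phi_dupj Cobj eps' sig' f hf hnd hjspec hjmin (by omega) hSd]
      simp only [Category.assoc, eqToHom_trans_assoc, eqToHom_refl, Category.id_comp]
      rfl
    · have hnd : ∀ i, ¬descAt f i := fun i hi => hdf ⟨i, hi⟩
      have hnu : ∀ i, ¬dupAt f i := fun i hi => he ⟨i, hi⟩
      have hnm : n = m := mono_eq hf hnd hnu
      subst hnm
      have hfi : f = id := mono_id hf hnd hnu
      subst hfi
      have hid : (⟨id, hf⟩ : FinCardS.of n ⟶ FinCardS.of n) = 𝟙 (FinCardS.of n) := rfl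
      erw [hid]
      rw [G.map_id, Phi_mono_eq Cobj eps' sig' id hf hnd hnu rfl]
      simp

end FinalSec

end UFS
/-- STATEMENT 6: given a graded object `Cobj` of a category `𝒞` together with morphisms
`ε^n_i : C_{n+1} ⟶ C_n` and `σ^n_i : C_n ⟶ C_n` satisfying the pure codegeneracy
relations, the Moore relations, and the codegeneracy–symmetry relations, there is a
unique functor `F : finCard_s ⥤ 𝒞` with `F(n) = C_n`, `F(ε^n_i) = ε^n_i` and
`F(σ^n_i) = σ^n_i`. -/
theorem unique_functor_from_finCardS_of_relations
    (𝒞 : Type*) [Category 𝒞] (Cobj : ℕ → 𝒞)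
    (eps' : ∀ (n i : ℕ), 1 ≤ i → i ≤ n → (Cobj (n + 1) ⟶ Cobj n))
    (sig' : ∀ (n i : ℕ), 1 ≤ i → i + 1 ≤ n → (Cobj n ⟶ Cobj n))
    -- pure codegeneracy relations: ε_i ; ε_j = ε_{j+1} ; ε_i  (i ≤ j)
    (rel_ee : ∀ (n i j : ℕ) (h1 : 1 ≤ i) (hij : i ≤ j) (hj : j ≤ n),
      eps' (n + 1) i h1 (by omega) ≫ eps' n j (by omega) hj
        = eps' (n + 1) (j + 1) (by omega) (by omega) ≫ eps' n i h1 (by omega))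
    -- Moore relations
    (rel_ss : ∀ (n i : ℕ) (h1 : 1 ≤ i) (h2 : i + 1 ≤ n),
      sig' n i h1 h2 ≫ sig' n i h1 h2 = 𝟙 (Cobj n))
    (rel_braid : ∀ (n i : ℕ) (h1 : 1 ≤ i) (h2 : i + 2 ≤ n),
      sig' n i h1 (by omega) ≫ sig' n (i + 1) (by omega) (by omega) ≫ sig' n i h1 (by omega)
        = sig' n (i + 1) (by omega) (by omega) ≫ sig' n i h1 (by omega)
            ≫ sig' n (i + 1) (by omega) (by omega))
    (rel_comm : ∀ (n i j : ℕ) (h1 : 1 ≤ i) (hij : i + 1 < j) (hj : j + 1 ≤ n),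
      sig' n j (by omega) hj ≫ sig' n i h1 (by omega)
        = sig' n i h1 (by omega) ≫ sig' n j (by omega) hj)
    -- codegeneracy–symmetry relations
    (rel_es1 : ∀ (n i j : ℕ) (h1 : 1 ≤ i) (hij : i + 1 < j) (hj : j ≤ n),
      eps' n j (by omega) hj ≫ sig' n i h1 (by omega)
        = sig' (n + 1) i h1 (by omega) ≫ eps' n j (by omega) hj)
    (rel_es2 : ∀ (n i j : ℕ) (hj : 1 ≤ j) (hji : j < i) (hi : i + 1 ≤ n),
      eps' n j hj (by omega) ≫ sig' n i (by omega) hi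
        = sig' (n + 1) (i + 1) (by omega) (by omega) ≫ eps' n j hj (by omega))
    (rel_es3 : ∀ (n i : ℕ) (h1 : 1 ≤ i) (h2 : i + 1 ≤ n),
      eps' n i h1 (by omega) ≫ sig' n i h1 h2
        = sig' (n + 1) (i + 1) (by omega) (by omega) ≫ sig' (n + 1) i h1 (by omega)
            ≫ eps' n (i + 1) (by omega) h2)
    (rel_es4 : ∀ (n i : ℕ) (h1 : 1 ≤ i) (h2 : i ≤ n),
      sig' (n + 1) i h1 (by omega) ≫ eps' n i h1 h2 = eps' n i h1 h2) :
    ∃! F : FinCardS ⥤ 𝒞,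
      ∃ hobj : ∀ n : ℕ, F.obj (FinCardS.of n) = Cobj n,
        (∀ (n i : ℕ) (h1 : 1 ≤ i) (h2 : i ≤ n),
          F.map (epsHomS n i h1 h2)
            = eqToHom (hobj (n + 1)) ≫ eps' n i h1 h2 ≫ eqToHom (hobj n).symm) ∧
        (∀ (n i : ℕ) (h1 : 1 ≤ i) (h2 : i + 1 ≤ n),
          F.map (sigmaHomS n i h1 h2)
            = eqToHom (hobj n) ≫ sig' n i h1 h2 ≫ eqToHom (hobj n).symm) := by

  have hR : UFS.GoodRel Cobj eps' sig' :=
    { R1 := fun {n a b} hab hb h1 h2 h3 => rel_ee n (a+1) (b+1) (by omega) (by omega) hb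
      R2 := fun {n k} h => rel_ss n (k+1) (by omega) h
      R3 := fun {n k} h h1 => rel_braid n (k+1) (by omega) (by omega)
      R4 := fun {n a b} hab hb ha => rel_comm n (a+1) (b+1) (by omega) (by omega) hb
      R5 := fun {n k l} hkl hl hk hk' => rel_es1 n (k+1) (l+1) (by omega) (by omega) hl
      R6 := fun {n k l} hlk hk hl hk' => rel_es2 n (k+1) (l+1) (by omega) (by omega) hk
      R7 := fun {n k} hk h1 h2 h3 h4 => rel_es3 n (k+1) (by omega) hk
      R8 := fun {n k} hk h2 => rel_es4 n (k+1) (by omega) hk }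
  refine ⟨UFS.Fctr hR, ⟨fun n => rfl, fun n i h1 h2 => ?_, fun n i h1 h2 => ?_⟩, ?_⟩
  · erw [eqToHom_refl, eqToHom_refl, Category.id_comp, Category.comp_id]
    exact UFS.Fctr_map_eps hR n i h1 h2
  · erw [eqToHom_refl, Category.id_comp, Category.comp_id]
    exact UFS.Fctr_map_sigma hR n i h1 h2
  · rintro G ⟨hobjG, hepsG, hsigG⟩
    refine CategoryTheory.Functor.ext (fun X => ?_) (fun X Y u => ?_)
    · cases X with
      | mk len => exact hobjG len
    · cases X with
      | mk a =>
        cases Y with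
        | mk b =>
          obtain ⟨f, hf2⟩ := u
          exact UFS.Gmap hR G hobjG hepsG hsigG (UFS.msr a b f) f hf2 le_rfl
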